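/- arXiv:2203.08193 — 14 statements merged into one kernel-verified Lean document; each statement's English description precedes it below -/
import Mathlib

section
/- Let X be a finite nonempty set with exactly k elements, and let Φ₁, …, Φ_r be equivalence relations (setoids) on X. Then there exists a subset T of {1, …, r} with |T| < k such that the infimum (common refinement) of all the Φ_t for t ∈ {1,…,r} equals the infimum of the Φ_t for t ∈ T. -/
private lemma quot_card_lt {X : Type*} [Fintype X] {s t : Setoid X} (h : s < t) :
    Nat.card (Quotient t) < Nat.card (Quotient s) := by
  classical
  haveI : Fintype (Quotient s) := Fintype.ofFinite _
  haveI : Fintype (Quotient t) := Fintype.ofFinite _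
  rw [Nat.card_eq_fintype_card, Nat.card_eq_fintype_card]
  set f : Quotient s → Quotient t := Quotient.map' id (fun a b hab => h.1 hab) with hf
  have hsurj : Function.Surjective f := by
    intro x
    induction x using Quotient.inductionOn' with
    | h a => exact ⟨Quotient.mk'' a, rfl⟩
  have hninj : ¬ Function.Injective f := by
    intro hinj
    apply absurd (le_antisymm h.le ?_) h.ne
    intro a b hab
    have : f (Quotient.mk'' a) = f (Quotient.mk'' b) := Quotient.sound' hab
    exact Quotient.exact' (hinj this)
  exact Fintype.card_lt_of_surjective_not_injective f hsurj hninj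

private lemma quot_card_le {X : Type*} [Fintype X] (s : Setoid X) :
    Nat.card (Quotient s) ≤ Fintype.card X := by
  have := Nat.card_le_card_of_surjective (Quotient.mk s) Quotient.mk_surjective
  simpa using this

private lemma stmt0_aux {X : Type*} [Fintype X] [Nonempty X]
    (r : ℕ) (Φ : Fin r → Setoid X) :
    ∀ n (T : Finset (Fin r)), Tᶜ.card ≤ n →
      T.card + 1 ≤ Nat.card (Quotient (⨅ t ∈ T, Φ t)) →
      ∃ T' : Finset (Fin r), T'.card + 1 ≤ Nat.card (Quotient (⨅ t ∈ T', Φ t)) ∧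
        (⨅ t, Φ t) = ⨅ t ∈ T', Φ t := by
  classical
  intro n
  induction n with
  | zero =>
    intro T hT hcard
    refine ⟨T, hcard, le_antisymm (le_iInf₂ fun t _ => iInf_le _ t) ?_⟩
    have : T = Finset.univ := by
      have h1 : Tᶜ = ∅ := Finset.card_eq_zero.mp (Nat.le_zero.mp hT)
      rwa [Finset.compl_eq_empty_iff] at h1
    subst this
    exact le_iInf fun t => iInf₂_le t (Finset.mem_univ t)
  | succ n ih =>
    intro T hT hcard
    by_cases heq : (⨅ t, Φ t) = ⨅ t ∈ T, Φ t
    · exact ⟨T, hcard, heq⟩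
    · have hle : (⨅ t, Φ t) ≤ ⨅ t ∈ T, Φ t := le_iInf₂ fun t _ => iInf_le _ t
      have : ¬ (⨅ t ∈ T, Φ t) ≤ ⨅ t, Φ t := fun h => heq (le_antisymm hle h)
      have : ∃ t, ¬ (⨅ t ∈ T, Φ t) ≤ Φ t := by
        by_contra hc
        push_neg at hc
        exact this (le_iInf hc)
      obtain ⟨t, ht⟩ := this
      have htT : t ∉ T := fun h => ht (iInf₂_le t h)
      have hins : (⨅ s ∈ insert t T, Φ s) < ⨅ s ∈ T, Φ s := by
        rw [Finset.iInf_insert]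
        exact lt_of_le_of_ne inf_le_right (fun h => ht (h ▸ inf_le_left))
      have hlt := quot_card_lt hins
      apply ih (insert t T)
      · have : (insert t T)ᶜ.card + 1 = Tᶜ.card := by
          rw [Finset.compl_insert, Finset.card_erase_add_one]
          simpa using htT
        omega
      · rw [Finset.card_insert_of_notMem htT]
        omega

/-- Let `X` be a finite nonempty set with exactly `k` elements, and let
`Φ₁, …, Φ_r` be setoids on `X`. Then there exists `T ⊆ {1,…,r}` with `|T| < k` such that
the infimum (common refinement) of all the `Φ t` equals the infimum over `t ∈ T`. -/
theorem stmt0 {X : Type*} [Fintype X] [Nonempty X] (k : ℕ) (hk : Fintype.card X = k)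
    (r : ℕ) (Φ : Fin r → Setoid X) :
    ∃ T : Finset (Fin r), T.card < k ∧ (⨅ t, Φ t) = ⨅ t ∈ T, Φ t := by
  classical
  have h0 : (∅ : Finset (Fin r)).card + 1 ≤ Nat.card (Quotient (⨅ t ∈ (∅ : Finset (Fin r)), Φ t)) := by
    haveI : Nonempty (Quotient (⨅ t ∈ (∅ : Finset (Fin r)), Φ t)) :=
      Nonempty.map (Quotient.mk _) inferInstance
    simpa [Nat.one_le_iff_ne_zero, Nat.pos_iff_ne_zero] using Nat.card_pos (α := Quotient (⨅ t ∈ (∅ : Finset (Fin r)), Φ t))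
  obtain ⟨T, hcard, heq⟩ := stmt0_aux r Φ (∅ᶜ : Finset (Fin r)).card ∅ le_rfl h0
  refine ⟨T, ?_, heq⟩
  have := quot_card_le (⨅ t ∈ T, Φ t)
  omega
end

section
/- Let X be a finite set and s a setoid on X with exactly z equivalence classes, and let d be a natural number with d < z. Then the number of setoids t on X that are coarser than s (i.e., s ≤ t in the refinement order) and have exactly z − d equivalence classes is at most z^(2d). -/
open Function

theorem aux_encode {Q : Type*} [Finite Q] (z d : ℕ) (hz : Nat.card Q = z) (hd : d < z) :
    ∃ F : {u : Setoid Q // Nat.card (Quotient u) = z - d} → (Fin d → Q × Q),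
      Function.Injective F := by
  classical
  set T := {u : Setoid Q // Nat.card (Quotient u) = z - d} with hT
  let g : T → Q → Q := fun u c => (Quotient.mk u.1 c).out
  have hmkg : ∀ (u : T) (c : Q), Quotient.mk u.1 (g u c) = Quotient.mk u.1 c := by
    intro u c
    exact Quotient.out_eq _
  have hgrel : ∀ (u : T) (a b : Q), u.1.r a b ↔ g u a = g u b := by
    intro u a b
    constructor
    · intro h
      simp only [g]
      congr 1
      exact Quotient.sound h
    · intro h
      have := congrArg (Quotient.mk u.1) h
      rw [hmkg, hmkg] at this
      exact Quotient.exact this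
  have hidem : ∀ (u : T) (c : Q), g u (g u c) = g u c := by
    intro u c
    simp only [g, hmkg]
  have hrange : ∀ u : T, Set.range (g u) = {c | g u c = c} := by
    intro u
    ext c
    constructor
    · rintro ⟨a, rfl⟩; exact hidem u a
    · intro h; exact ⟨c, h⟩
  have hcardfix : ∀ u : T, Nat.card {c | g u c = c} = z - d := by
    intro u
    rw [← hrange]
    have : Set.range (g u) = Set.range (Quotient.out : Quotient u.1 → Q) := by
      ext c
      constructor
      · rintro ⟨a, rfl⟩; exact ⟨Quotient.mk u.1 a, rfl⟩
      · rintro ⟨q, rfl⟩; exact ⟨q.out, by simp [g, Quotient.out_eq]⟩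
    rw [this, Nat.card_range_of_injective Quotient.out_injective, u.2]
  have hcardS : ∀ u : T, Nat.card {c | g u c ≠ c} = d := by
    intro u
    have h1 := Set.ncard_add_ncard_compl {c | g u c ≠ c} (Set.toFinite _)
    have h2 : {c | g u c ≠ c}ᶜ = {c | g u c = c} := by
      ext c; simp [Set.mem_compl_iff]
    rw [h2] at h1
    have h3 := hcardfix u
    rw [Nat.card_coe_set_eq] at h3 ⊢
    have h4 : Nat.card Q = z := hz
    rw [← Set.ncard_univ] at h4
    omega
  let e : (u : T) → {c | g u c ≠ c} ≃ Fin d := fun u =>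
    Finite.equivFinOfCardEq (hcardS u)
  refine ⟨fun u i => (((e u).symm i : Q), g u ((e u).symm i : Q)), ?_⟩
  intro u v huv
  have hrangeF : ∀ (u : T) (a b : Q),
      (a, b) ∈ Set.range (fun i => (((e u).symm i : Q), g u ((e u).symm i : Q))) ↔
        g u a ≠ a ∧ g u a = b := by
    intro u a b
    constructor
    · rintro ⟨i, hi⟩
      obtain ⟨h1, h2⟩ := Prod.mk.injEq .. ▸ hi
      subst h1
      exact ⟨((e u).symm i).2, (by rw [h2])⟩
    · rintro ⟨ha, rfl⟩
      exact ⟨e u ⟨a, ha⟩, by simp⟩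
  have hre : ∀ a b : Q, (g u a ≠ a ∧ g u a = b) ↔ (g v a ≠ a ∧ g v a = b) := by
    intro a b
    have huv' : (fun i => ((((e u).symm i : Q)), g u ((e u).symm i : Q))) =
        (fun i => ((((e v).symm i : Q)), g v ((e v).symm i : Q))) := huv
    rw [← hrangeF u a b, ← hrangeF v a b, huv']
  have hgg : g u = g v := by
    funext c
    by_cases h1 : g u c = c
    · by_cases h2 : g v c = c
      · rw [h1, h2]
      · exact absurd ((hre c (g v c)).2 ⟨h2, rfl⟩).1 (not_not.mpr h1)
    · obtain ⟨h2, h3⟩ := (hre c (g u c)).1 ⟨h1, rfl⟩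
      exact h3.symm
  apply Subtype.ext
  apply Setoid.ext
  intro a b
  rw [hgrel u, hgrel v, hgg]

/-- Let `X` be a finite set and `s` a setoid on `X` with exactly `z`
equivalence classes, and `d < z`. Then the number of setoids `t` on `X` coarser than `s`
(i.e. `s ≤ t`) with exactly `z - d` equivalence classes is at most `z ^ (2 * d)`. -/
theorem stmt1 {X : Type*} [Finite X] (s : Setoid X) (z d : ℕ)
    (hz : Nat.card (Quotient s) = z) (hd : d < z) :
    Nat.card {t : Setoid X // s ≤ t ∧ Nat.card (Quotient t) = z - d} ≤ z ^ (2 * d) := by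
  classical
  obtain ⟨F, hF⟩ := aux_encode (Q := Quotient s) z d hz hd
  -- map t to ker of the projection Quotient s → Quotient t
  let proj : (t : {t : Setoid X // s ≤ t ∧ Nat.card (Quotient t) = z - d}) →
      Quotient s → Quotient t.1 := fun t => Quotient.map' id (fun a b h => t.2.1 h)
  have hprojmk : ∀ t x, proj t (Quotient.mk s x) = Quotient.mk t.1 x := fun t x => rfl
  have hsurj : ∀ t, Surjective (proj t) := by
    intro t q
    obtain ⟨x, rfl⟩ := Quotient.exists_rep q
    exact ⟨Quotient.mk s x, rfl⟩
  let G : {t : Setoid X // s ≤ t ∧ Nat.card (Quotient t) = z - d} →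
      {u : Setoid (Quotient s) // Nat.card (Quotient u) = z - d} := fun t =>
    ⟨Setoid.ker (proj t), by
      rw [Nat.card_congr (Setoid.quotientKerEquivOfSurjective _ (hsurj t))]
      exact t.2.2⟩
  have hG : Injective G := by
    intro t₁ t₂ h
    have h' : Setoid.ker (proj t₁) = Setoid.ker (proj t₂) := congrArg Subtype.val h
    apply Subtype.ext
    apply Setoid.ext
    intro a b
    have key : ∀ t, t.1.r a b ↔ (Setoid.ker (proj t)).r (Quotient.mk s a) (Quotient.mk s b) := by
      intro t
      rw [Setoid.ker_def, hprojmk, hprojmk]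
      exact ⟨fun h => Quotient.sound h, fun h => Quotient.exact h⟩
    rw [key t₁, key t₂, h']
  have : Nat.card {t : Setoid X // s ≤ t ∧ Nat.card (Quotient t) = z - d}
      ≤ Nat.card (Fin d → Quotient s × Quotient s) :=
    Nat.card_le_card_of_injective (F ∘ G) (hF.comp hG)
  refine this.trans ?_
  rw [Nat.card_fun, Nat.card_prod, hz, Nat.card_eq_fintype_card, Fintype.card_fin,
    mul_pow, two_mul, pow_add]
end

section
/- Let (G, ℓ) be a ZMod 2-labeled graph. If for some vertex v there exists a closed walk w : G.Walk v v whose label sum equals 1, then there exist a vertex u and a closed walk c : G.Walk u u such that c is a cycle and the label sum of c equals 1. -/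
open SimpleGraph

private lemma zmod2_add_eq_one {x y : ZMod 2} (h : x + y = 1) : x = 1 ∨ y = 1 := by
  revert h; revert x y; decide

private lemma aux {V : Type*} [DecidableEq V] (G : SimpleGraph V) (ℓ : Sym2 V → ZMod 2) :
    ∀ (n : ℕ) (u : V) (w : G.Walk u u), w.length ≤ n → (w.edges.map ℓ).sum = 1 →
    ∃ (x : V) (c : G.Walk x x), c.IsCycle ∧ (c.edges.map ℓ).sum = 1 := by
  intro n
  induction n with
  | zero =>
    intro u w hl hw
    cases w with
    | nil => simp at hw
    | cons h p => simp at hl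
  | succ n ih =>
    intro u w hl hw
    cases w with
    | nil => simp at hw
    | @cons _ a _ h p =>
      by_cases hp : p.IsPath
      · by_cases he : s(u, a) ∈ p.edges
        · -- the path p goes a → u using edge s(u,a); then p must be the single edge
          cases p with
          | nil => simp at he
          | @cons _ b _ h2 p2 =>
            rw [SimpleGraph.Walk.edges_cons, List.mem_cons] at he
            rcases he with he | he
            · have hba : b = u := by
                rw [Sym2.eq_iff] at he
                rcases he with ⟨h1, _⟩ | ⟨h1, _⟩
                · exact absurd h1 h.ne
                · exact h1.symm
              subst hba
              have : p2 = SimpleGraph.Walk.nil :=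
                (SimpleGraph.Walk.isPath_iff_eq_nil).1 hp.of_cons
              subst this
              simp only [SimpleGraph.Walk.edges_cons, SimpleGraph.Walk.edges_nil,
                List.map_cons, List.map_nil, List.sum_cons, List.sum_nil, add_zero] at hw
              rw [Sym2.eq_swap] at hw
              rw [CharTwo.add_self_eq_zero] at hw
              exact absurd hw (by decide)
            · have ha : a ∈ p2.support := p2.snd_mem_support_of_mem_edges he
              rw [SimpleGraph.Walk.cons_isPath_iff] at hp
              exact absurd ha hp.2
        · exact ⟨u, SimpleGraph.Walk.cons h p,
            (SimpleGraph.Walk.cons_isCycle_iff p h).2 ⟨hp, he⟩, hw⟩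
      · -- p has a repeated vertex; split the closed walk into two shorter closed walks
        rw [SimpleGraph.Walk.isPath_def, List.nodup_iff_count_le_one] at hp
        push_neg at hp
        obtain ⟨y, hy2⟩ := hp
        have hy : y ∈ p.support := by
          rw [← List.count_pos_iff]; omega
        have hspec := p.take_spec hy
        have hcount1 := p.count_support_takeUntil_eq_one hy
        have hsup : p.support = (p.takeUntil y hy).support ++ (p.dropUntil y hy).support.tail := by
          conv_lhs => rw [← hspec]
          exact SimpleGraph.Walk.support_append _ _
        have hytail : y ∈ (p.dropUntil y hy).support.tail := by
          rw [← List.count_pos_iff]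
          have : List.count y ((p.takeUntil y hy).support ++ (p.dropUntil y hy).support.tail) =
              List.count y (p.takeUntil y hy).support + List.count y (p.dropUntil y hy).support.tail :=
            List.count_append
          rw [← hsup, hcount1] at this
          omega
        set q := p.takeUntil y hy with hq
        set r := p.dropUntil y hy with hr
        clear_value q r
        cases r with
        | nil => simp at hytail
        | @cons _ b _ h2 r2 =>
          simp only [SimpleGraph.Walk.support_cons, List.tail_cons] at hytail
          -- two closed walks: c at y, w' at u
          have hspec2 := r2.take_spec hytail
          set tU := r2.takeUntil y hytail with htU
          set dU := r2.dropUntil y hytail with hdU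
          clear_value tU dU
          have hedges : p.edges = q.edges ++ (s(y, b) :: (tU.edges ++ dU.edges)) := by
            conv_lhs => rw [← hspec]
            rw [SimpleGraph.Walk.edges_append, SimpleGraph.Walk.edges_cons]
            congr 2
            conv_lhs => rw [← hspec2]
            exact SimpleGraph.Walk.edges_append _ _
          have hlen : p.length = q.length + (1 + (tU.length + dU.length)) := by
            conv_lhs => rw [← hspec]
            rw [SimpleGraph.Walk.length_append, SimpleGraph.Walk.length_cons]
            congr 1
            rw [Nat.add_comm]
            congr 1
            conv_lhs => rw [← hspec2]
            exact SimpleGraph.Walk.length_append _ _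
          have hsum : ((SimpleGraph.Walk.cons h2 tU : G.Walk y y).edges.map ℓ).sum
              + ((SimpleGraph.Walk.cons h (q.append dU) : G.Walk u u).edges.map ℓ).sum = 1 := by
            rw [← hw]
            simp only [SimpleGraph.Walk.edges_cons, SimpleGraph.Walk.edges_append, hedges,
              List.map_cons, List.map_append, List.sum_cons, List.sum_append]
            ring
          rcases zmod2_add_eq_one hsum with hc | hc
          · refine ih y (SimpleGraph.Walk.cons h2 tU) ?_ hc
            simp only [SimpleGraph.Walk.length_cons, hlen] at hl ⊢
            omega
          · refine ih u (SimpleGraph.Walk.cons h (q.append dU)) ?_ hc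
            simp only [SimpleGraph.Walk.length_cons, SimpleGraph.Walk.length_append, hlen] at hl ⊢
            omega

/-- In a `ZMod 2`-labeled graph, if some closed walk has label sum `1`,
then there is a cycle with label sum `1`. -/
theorem stmt2 {V : Type*} (G : SimpleGraph V) (ℓ : Sym2 V → ZMod 2) (v : V)
    (w : G.Walk v v) (hw : (w.edges.map ℓ).sum = 1) :
    ∃ (u : V) (c : G.Walk u u), c.IsCycle ∧ (c.edges.map ℓ).sum = 1 := by
  classical
  exact aux G ℓ w.length v w le_rfl hw
end

section
/- Let (G, ℓ) be a ZMod 2-labeled graph on a finite vertex type, with G connected, and let T be a spanning tree of G. If G contains an odd-labeled cycle, then G contains an odd-labeled cycle exactly one of whose edges is not an edge of T. -/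
open SimpleGraph

/-- Let `(G, ℓ)` be a `ZMod 2`-labeled connected graph on a finite vertex
type, and `T` a spanning tree of `G`. If `G` contains an odd-labeled cycle, then `G`
contains an odd-labeled cycle exactly one of whose edges is not an edge of `T`. -/
theorem stmt3 {V : Type*} [Fintype V] (G : SimpleGraph V) (ℓ : Sym2 V → ZMod 2)
    (hG : G.Connected) (T : SimpleGraph V) (hT : T ≤ G) (hTconn : T.Connected)
    (hTacyclic : T.IsAcyclic)
    (h : ∃ (v : V) (c : G.Walk v v), c.IsCycle ∧ (c.edges.map ℓ).sum = 1) :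
    ∃ (v : V) (c : G.Walk v v), c.IsCycle ∧ (c.edges.map ℓ).sum = 1 ∧
      (∃! e : Sym2 V, e ∈ c.edges ∧ e ∉ T.edgeSet) := by
  classical
  obtain ⟨r⟩ := hG.nonempty
  have hTree : T.IsTree := ⟨hTconn, hTacyclic⟩
  choose p hp hup using fun v w => hTree.existsUnique_path v w
  have two : ∀ x : ZMod 2, x + x = 0 := fun x => CharTwo.add_self_eq_zero x
  -- potential function
  set φ : V → ZMod 2 := fun v => ((p v r).edges.map ℓ).sum with hφ
  -- key edge lemma
  have E : ∀ {a b : V}, T.Adj a b → ℓ s(a, b) = φ a + φ b := by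
    intro a b hab
    by_cases hmem : a ∈ (p b r).support
    · -- p b r passes through a
      have hsplit := ((p b r).take_spec hmem).symm
      have htake : ((p b r).takeUntil a hmem).IsPath := (hp b r).takeUntil hmem
      have hdrop : ((p b r).dropUntil a hmem).IsPath := (hp b r).dropUntil hmem
      have hdrop' : (p b r).dropUntil a hmem = p a r := hup a r _ hdrop
      have hsingle : (Walk.cons hab Walk.nil : T.Walk a b).IsPath := by
        simp [Walk.isPath_def, hab.ne]
      have htake' : (p b r).takeUntil a hmem = Walk.cons hab.symm Walk.nil := by
        have h1 : ((p b r).takeUntil a hmem : T.Walk b a) = p b a := hup b a _ htake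
        have h2 : (Walk.cons hab.symm Walk.nil : T.Walk b a) = p b a := by
          refine hup b a _ ?_
          simp [Walk.isPath_def, hab.ne']
        rw [h1, h2]
      have : φ b = ℓ s(b, a) + φ a := by
        rw [hφ]
        simp only
        rw [hsplit, Walk.edges_append, List.map_append, List.sum_append, htake', hdrop']
        simp
      rw [show s(a, b) = s(b, a) from Sym2.eq_swap, this,
        add_comm (ℓ s(b, a)) (φ a), ← add_assoc, two, zero_add]
    · -- extend p b r by the edge
      have hcons : (Walk.cons hab (p b r)).IsPath := (hp b r).cons hmem
      have hcons' : Walk.cons hab (p b r) = p a r := hup a r _ hcons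
      have : φ a = ℓ s(a, b) + φ b := by
        rw [hφ]; simp only
        rw [← hcons']
        simp
      rw [this, add_assoc, two, add_zero]
  -- label sum of any T-walk telescopes
  have LT : ∀ {a b : V} (w : T.Walk a b), (w.edges.map ℓ).sum = φ a + φ b := by
    intro a b w
    induction w with
    | nil => rw [two]; simp
    | cons hadj w ih =>
        rename_i u v' w'
        simp only [Walk.edges_cons, List.map_cons, List.sum_cons, ih, E hadj]
        rw [← add_assoc, add_assoc (φ u), two, add_zero]
  -- the twisted labeling
  set ψ : Sym2 V → ZMod 2 := Sym2.lift ⟨fun x y => φ x + φ y, fun x y => add_comm _ _⟩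
    with hψ
  have L : ∀ {a b : V} (w : G.Walk a b), (w.edges.map ψ).sum = φ a + φ b := by
    intro a b w
    induction w with
    | nil => rw [two]; simp
    | cons hadj w ih =>
        rename_i u v' w'
        simp only [Walk.edges_cons, List.map_cons, List.sum_cons, ih, hψ, Sym2.lift_mk]
        rw [← hψ, ih]
        rw [← add_assoc, add_assoc (φ u), two, add_zero]
  obtain ⟨v, c, hc, hsum⟩ := h
  -- the twisted sum of the cycle is 1
  have hsum' : (c.edges.map fun e => ℓ e + ψ e).sum = 1 := by
    rw [List.sum_map_add, hsum, L c, two, add_zero]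
  -- find an edge with twisted label 1
  have hex : ∃ e ∈ c.edges, ℓ e + ψ e = 1 := by
    by_contra hno
    push_neg at hno
    have : (c.edges.map fun e => ℓ e + ψ e).sum = 0 := by
      apply List.sum_eq_zero
      intro x hx
      obtain ⟨e, he, rfl⟩ := List.mem_map.mp hx
      have := hno e he
      revert this
      generalize ℓ e + ψ e = y
      revert y; decide
    rw [this] at hsum'
    exact one_ne_zero hsum'.symm
  obtain ⟨e, hec, hodd⟩ := hex
  have heG : e ∈ G.edgeSet := c.edges_subset_edgeSet hec
  induction e with
  | h a b =>
  have hab : G.Adj a b := heG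
  -- the edge is not in T
  have hnT : s(a, b) ∉ T.edgeSet := by
    intro hTe
    have : ℓ s(a, b) + ψ s(a, b) = 0 := by
      rw [E hTe, hψ, Sym2.lift_mk, two]
    rw [this] at hodd
    exact one_ne_zero hodd.symm
  -- build the fundamental cycle
  set q : G.Walk b a := (p b a).mapLe hT with hq
  have hqedges : q.edges = (p b a).edges := by
    rw [hq, Walk.mapLe]
    rw [Walk.edges_map]
    have : ∀ e ∈ (p b a).edges, Sym2.map (Hom.ofLE hT) e = e := by
      intro e _
      rcases e with ⟨x, y⟩
      rfl
    exact List.map_congr_left this |>.trans (List.map_id _)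
  have hqpath : q.IsPath := (hp b a).mapLe hT
  have hcyc : (Walk.cons hab q).IsCycle := by
    rw [Walk.cons_isCycle_iff]
    refine ⟨hqpath, fun hmem => hnT ?_⟩
    rw [hqedges] at hmem
    exact (p b a).edges_subset_edgeSet hmem
  refine ⟨a, Walk.cons hab q, hcyc, ?_, ?_⟩
  · -- odd label sum
    have : ((p b a).edges.map ℓ).sum = φ b + φ a := LT (p b a)
    simp only [Walk.edges_cons, List.map_cons, List.sum_cons, hqedges, this]
    rw [← hodd, hψ, Sym2.lift_mk, add_comm (φ b) (φ a)]
  · -- unique non-tree edge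
    refine ⟨s(a, b), ⟨by simp, hnT⟩, ?_⟩
    rintro e' ⟨he'c, he'T⟩
    simp only [Walk.edges_cons, List.mem_cons] at he'c
    rcases he'c with rfl | he'q
    · rfl
    · exact absurd ((p b a).edges_subset_edgeSet (hqedges ▸ he'q)) he'T
end

section
/- Let (G, ℓ) be a connected k-labeled graph on a finite vertex type and T a spanning tree of G. For each edge e = {u, v} of G that is not an edge of T, let γ_e denote the fundamental cycle of e: the closed walk obtained by traversing the edge e from u to v and then the unique path in T from v back to u. Then for all i, j : Fin k the following are equivalent: (a) every cycle γ of G satisfies parity_i(γ) = parity_j(γ); (b) for every edge e of G not in T, parity_i(γ_e) = parity_j(γ_e). -/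
open SimpleGraph

section aux
variable {V : Type*} [DecidableEq V] {T : SimpleGraph V}

/-- canonical path in T -/
noncomputable def canP (hc : T.Connected) (a b : V) : T.Path a b :=
  ((hc.preconnected a b).some).toPath

noncomputable def ps (hc : T.Connected) (f : Sym2 V → ZMod 2) (a b : V) : ZMod 2 :=
  (((canP hc a b : T.Walk a b)).edges.map f).sum

variable (hc : T.Connected) (ha : T.IsAcyclic) (f : Sym2 V → ZMod 2)

include ha in
lemma ps_of_isPath {a b : V} (p : T.Walk a b) (hp : p.IsPath) :
    (p.edges.map f).sum = ps hc f a b := by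
  have := ha.path_unique ⟨p, hp⟩ (canP hc a b)
  rw [ps, ← this]

include ha in
lemma ps_self (a : V) : ps hc f a a = 0 := by
  rw [← ps_of_isPath hc ha f Walk.nil Walk.IsPath.nil]
  simp

include ha in
lemma ps_adj {a c : V} (h : T.Adj a c) (b : V) :
    f s(a, c) + ps hc f c b = ps hc f a b := by
  set P : T.Walk c b := (canP hc c b : T.Walk c b) with hPdef
  have hP : P.IsPath := (canP hc c b).2
  by_cases hmem : a ∈ P.support
  · have hQ : (P.takeUntil a hmem).IsPath := hP.takeUntil hmem
    have hR : (P.dropUntil a hmem).IsPath := hP.dropUntil hmem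
    have hsingle : (Walk.cons h.symm Walk.nil : T.Walk c a).IsPath := by
      simp [Walk.cons_isPath_iff, h.ne']
    have hQeq : P.takeUntil a hmem = Walk.cons h.symm Walk.nil := by
      have := ha.path_unique ⟨P.takeUntil a hmem, hQ⟩ ⟨Walk.cons h.symm Walk.nil, hsingle⟩
      exact congrArg Subtype.val this
    have hspec := P.take_spec hmem
    have hsum : (P.edges.map f).sum = f s(c, a) + ((P.dropUntil a hmem).edges.map f).sum := by
      conv_lhs => rw [← hspec]
      rw [Walk.edges_append, List.map_append, List.sum_append, hQeq]
      simp
    have h1 : ps hc f c b = f s(c, a) + ps hc f a b := by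
      rw [ps, ← hPdef, hsum, ps_of_isPath hc ha f _ hR]
    rw [h1, Sym2.eq_swap, ← add_assoc]
    have h2 : f s(c, a) + f s(c, a) = 0 := CharTwo.add_self_eq_zero _
    rw [h2, zero_add]
  · have hcons : (Walk.cons h P).IsPath := hP.cons hmem
    have := ps_of_isPath hc ha f (Walk.cons h P) hcons
    show f s(a, c) + (P.edges.map f).sum = ps hc f a b
    simpa [List.sum_cons] using this

include ha in
lemma ps_walk {a b : V} (p : T.Walk a b) : (p.edges.map f).sum = ps hc f a b := by
  induction p with
  | nil => simp [ps_self hc ha f]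
  | cons h q ih =>
    rw [Walk.edges_cons, List.map_cons, List.sum_cons, ih, ps_adj hc ha f h]

include ha in
lemma ps_symm (a b : V) : ps hc f a b = ps hc f b a := by
  have hrev : ((canP hc a b : T.Walk a b).reverse).IsPath := (canP hc a b).2.reverse
  have := ps_of_isPath hc ha f _ hrev
  rw [← this, Walk.edges_reverse, List.map_reverse, List.sum_reverse, ps]

include ha in
lemma ps_trans (a b c : V) : ps hc f a b + ps hc f b c = ps hc f a c := by
  have := ps_walk hc ha f ((canP hc a b : T.Walk a b).append (canP hc b c : T.Walk b c))
  rw [Walk.edges_append, List.map_append, List.sum_append] at this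
  rw [ps, ps, this]

end aux

/-- For a connected `k`-labeled graph `(G, ℓ)` on a finite vertex type with
spanning tree `T`, and `i j : Fin k`: every cycle `γ` of `G` satisfies
`parity_i γ = parity_j γ` iff every fundamental cycle (a non-tree edge `{u,v}` of `G`
together with the unique path in `T` from `v` back to `u`) does. -/
theorem stmt4 {V : Type*} [Fintype V] {k : ℕ} (G : SimpleGraph V)
    (ℓ : Sym2 V → Fin k → ZMod 2) (hG : G.Connected)
    (T : SimpleGraph V) (hT : T ≤ G) (hTconn : T.Connected) (hTacyclic : T.IsAcyclic)
    (i j : Fin k) :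
    (∀ (v : V) (γ : G.Walk v v), γ.IsCycle →
        (γ.edges.map (fun e => ℓ e i)).sum = (γ.edges.map (fun e => ℓ e j)).sum) ↔
    (∀ (u v : V) (h : G.Adj u v), s(u, v) ∉ T.edgeSet →
        ∀ p : T.Walk v u, p.IsPath →
          ((Walk.cons h (p.mapLe hT)).edges.map (fun e => ℓ e i)).sum =
          ((Walk.cons h (p.mapLe hT)).edges.map (fun e => ℓ e j)).sum) := by
  classical
  set f : Sym2 V → ZMod 2 := fun e => ℓ e i - ℓ e j with hf
  have key : ∀ (l : List (Sym2 V)),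
      ((l.map (fun e => ℓ e i)).sum = (l.map (fun e => ℓ e j)).sum) ↔ (l.map f).sum = 0 := by
    intro l
    have hsum : (l.map f).sum = (l.map (fun e => ℓ e i)).sum - (l.map (fun e => ℓ e j)).sum := by
      induction l with
      | nil => simp
      | cons e t ih => rw [List.map_cons, List.sum_cons, ih]; simp only [hf, List.map_cons, List.sum_cons]; ring
    rw [hsum, sub_eq_zero]
  have edgesLe : ∀ {a b : V} (p : T.Walk a b), (p.mapLe hT).edges = p.edges := by
    intro a b p
    rw [Walk.edges_map]
    conv_rhs => rw [← List.map_id p.edges]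
    apply List.map_congr_left
    intro e _
    ext x
    simp [Hom.ofLE_apply]
  constructor
  · -- cycles ⇒ fundamental cycles
    intro hcyc u v h hnotT p hp
    have hpath : (p.mapLe hT).IsPath := hp.mapLe hT
    have hne : s(u, v) ∉ (p.mapLe hT).edges := by
      rw [edgesLe]
      intro hmem
      exact hnotT (p.edges_subset_edgeSet hmem)
    have : (Walk.cons h (p.mapLe hT)).IsCycle :=
      (Walk.cons_isCycle_iff _ h).mpr ⟨hpath, hne⟩
    exact hcyc u _ this
  · -- fundamental cycles ⇒ cycles
    intro hfund v γ _
    rw [key]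
    -- edge lemma
    have hedge : ∀ {a b : V}, G.Adj a b → f s(a, b) = ps hTconn f a b := by
      intro a b hab
      by_cases hTE : s(a, b) ∈ T.edgeSet
      · have hpath : (Walk.cons hTE Walk.nil : T.Walk a b).IsPath := by
          exact Walk.IsPath.nil.cons (by simp [hab.ne])
        have := ps_of_isPath hTconn hTacyclic f _ hpath
        simpa using (show ([s(a, b)].map f).sum = ps hTconn f a b from this)
      · have hp := (canP hTconn b a).2
        have := hfund a b hab hTE (canP hTconn b a : T.Walk b a) hp
        rw [key] at this
        rw [Walk.edges_cons, List.map_cons, List.sum_cons, edgesLe] at this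
        have hba : ((canP hTconn b a : T.Walk b a).edges.map f).sum = ps hTconn f b a :=
          ps_of_isPath hTconn hTacyclic f _ hp
        rw [hba] at this
        have := eq_neg_of_add_eq_zero_left this
        rw [this, ps_symm hTconn hTacyclic]
        exact (CharTwo.neg_eq _)
    -- telescoping
    have tele : ∀ {a b : V} (w : G.Walk a b), (w.edges.map f).sum = ps hTconn f a b := by
      intro a b w
      induction w with
      | nil => simp [ps_self hTconn hTacyclic f]
      | cons h q ih =>
        rw [Walk.edges_cons, List.map_cons, List.sum_cons, ih, hedge h,
          ps_trans hTconn hTacyclic f]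
    rw [tele γ, ps_self hTconn hTacyclic f]
end

section
/- Let G be a simple graph on a vertex type V_G, let V_H be a finite type, E a finite index type, a, b : E → V_H two endpoint functions, f : V_H → V_G a function, and for each e : E let w_e be a walk in G from f(a e) to f(b e) of length at least 1. Then the cardinality of the set (range of f) ∪ ⋃_{e : E} (support of w_e) is at most |V_H| + Σ_{e : E} (length(w_e) − 1); equivalently, it is at most |V_H| − |E| + Σ_{e : E} length(w_e). -/
open SimpleGraph

lemma aux_card {VG : Type*} [DecidableEq VG] {u v : VG} {G : SimpleGraph VG}
    (p : G.Walk u v) (hp : 1 ≤ p.length) (A : Finset VG) (hu : u ∈ A) (hv : v ∈ A) :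
    (p.support.toFinset \ A).card ≤ p.length - 1 := by
  cases p with
  | nil => simp at hp
  | @cons _ x _ h q =>
    have hsupp : (Walk.cons h q).support = u :: q.support := Walk.support_cons h q
    have hsub : (Walk.cons h q).support.toFinset \ A ⊆ q.support.toFinset.erase v := by
      intro y hy
      simp only [Finset.mem_sdiff, List.mem_toFinset, hsupp, List.mem_cons] at hy
      obtain ⟨hy1, hy2⟩ := hy
      rcases hy1 with h' | h'
      · exact absurd (h' ▸ hu) hy2
      · exact Finset.mem_erase.mpr ⟨fun hyv => hy2 (hyv ▸ hv), List.mem_toFinset.mpr h'⟩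
    calc ((Walk.cons h q).support.toFinset \ A).card
        ≤ (q.support.toFinset.erase v).card := Finset.card_le_card hsub
      _ = q.support.toFinset.card - 1 :=
          Finset.card_erase_of_mem (List.mem_toFinset.mpr q.end_mem_support)
      _ ≤ (Walk.cons h q).length - 1 := by
          have h1 := q.support.toFinset_card_le
          have h2 := q.length_support
          simp only [Walk.length_cons]
          omega

/-- Given walks `w e : G.Walk (f (a e)) (f (b e))` of length at least `1`
for each `e` in a finite index type `E`, the set `range f ∪ ⋃ e, support (w e)` has at
most `|V_H| + ∑ e, (length (w e) - 1)` elements. -/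
theorem stmt6 {VG VH : Type*} [Fintype VH] {E : Type*} [Fintype E]
    (G : SimpleGraph VG) (a b : E → VH) (f : VH → VG)
    (w : (e : E) → G.Walk (f (a e)) (f (b e)))
    (hlen : ∀ e, 1 ≤ (w e).length) :
    (Set.range f ∪ ⋃ e : E, {v | v ∈ (w e).support}).ncard ≤
      Fintype.card VH + ∑ e : E, ((w e).length - 1) := by
  classical
  set A : Finset VG := Finset.univ.image f with hA
  set B : Finset VG := Finset.univ.biUnion (fun e => (w e).support.toFinset \ A) with hB
  have hset : (Set.range f ∪ ⋃ e : E, {v | v ∈ (w e).support}) = ↑(A ∪ B) := by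
    ext x
    simp only [Set.mem_union, Set.mem_range, Set.mem_iUnion, Set.mem_setOf_eq,
      Finset.coe_union, Finset.coe_biUnion, Finset.mem_coe, Finset.mem_union,
      Finset.mem_biUnion, Finset.mem_image, Finset.mem_univ, true_and, hB,
      Finset.mem_sdiff, List.mem_toFinset, hA]
    tauto
  rw [hset, Set.ncard_coe_finset]
  have hAcard : A.card ≤ Fintype.card VH :=
    le_trans Finset.card_image_le (le_of_eq (Finset.card_univ))
  have hBcard : B.card ≤ ∑ e : E, ((w e).length - 1) := by
    refine le_trans (Finset.card_biUnion_le) (Finset.sum_le_sum fun e _ => ?_)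
    exact aux_card (w e) (hlen e) A (Finset.mem_image_of_mem f (Finset.mem_univ _))
      (Finset.mem_image_of_mem f (Finset.mem_univ _))
  calc (A ∪ B).card ≤ A.card + B.card := Finset.card_union_le _ _
    _ ≤ _ := Nat.add_le_add hAcard hBcard
end

section
/- Let G be a connected finite simple graph in which every vertex has degree at least 2, and let T be a spanning tree of G. Then the number of vertices of degree 1 in T (leaves of T) is at most 2·(|E(G)| − |E(T)|), twice the number of edges of G that are not edges of T. -/
open SimpleGraph

/-- Let `G` be a connected finite simple graph with minimum degree at least
`2` and `T` a spanning tree of `G`. Then the number of leaves of `T` (vertices of degree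
`1` in `T`) is at most twice the number of edges of `G` not in `T`. -/
theorem stmt7 {V : Type*} [Fintype V] [DecidableEq V] (G : SimpleGraph V)
    [DecidableRel G.Adj] (hG : G.Connected) (hdeg : ∀ v, 2 ≤ G.degree v)
    (T : SimpleGraph V) [DecidableRel T.Adj] (hT : T ≤ G) (hTconn : T.Connected)
    (hTacyclic : T.IsAcyclic) :
    (Finset.univ.filter (fun v => T.degree v = 1)).card ≤
      2 * (G.edgeFinset.card - T.edgeFinset.card) := by
  classical
  set L := Finset.univ.filter (fun v => T.degree v = 1) with hL
  set S := G.edgeFinset \ T.edgeFinset with hS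
  have hsub : T.edgeFinset ⊆ G.edgeFinset := by
    exact SimpleGraph.edgeFinset_mono hT
  have key : ∀ v ∈ L, ∃ e ∈ S, v ∈ e := by
    intro v hv
    simp only [hL, Finset.mem_filter] at hv
    have h1 : T.neighborFinset v ⊆ G.neighborFinset v := by
      intro w hw
      rw [SimpleGraph.mem_neighborFinset] at *
      exact hT hw
    have hcard : (T.neighborFinset v).card < (G.neighborFinset v).card := by
      have h2 : (T.neighborFinset v).card = 1 := hv.2
      have h3 : 2 ≤ (G.neighborFinset v).card := hdeg v
      omega
    have hss : T.neighborFinset v ⊂ G.neighborFinset v :=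
      h1.ssubset_of_ne (fun h => by rw [h] at hcard; exact lt_irrefl _ hcard)
    obtain ⟨w, hwG, hwT⟩ := Finset.exists_of_ssubset hss
    refine ⟨s(v, w), ?_, ?_⟩
    · rw [hS, Finset.mem_sdiff, SimpleGraph.mem_edgeFinset, SimpleGraph.mem_edgeFinset]
      rw [SimpleGraph.mem_neighborFinset] at hwG
      constructor
      · exact hwG
      · intro hc
        exact hwT (by rw [SimpleGraph.mem_neighborFinset]; exact hc)
    · exact Sym2.mem_mk_left v w
  choose f hfS hfmem using key
  -- extend f to a total function
  let g : V → Sym2 V := fun v => if h : v ∈ L then f v h else s(v, v)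
  have hgS : ∀ v ∈ L, g v ∈ S := fun v hv => by simp only [g, dif_pos hv]; exact hfS v hv
  have hgmem : ∀ v ∈ L, v ∈ g v := fun v hv => by simp only [g, dif_pos hv]; exact hfmem v hv
  have himg : L.image g ⊆ S := by
    intro e he
    obtain ⟨v, hv, rfl⟩ := Finset.mem_image.mp he
    exact hgS v hv
  have hfib : ∀ e ∈ L.image g, (L.filter fun v => g v = e).card ≤ 2 := by
    intro e _
    induction e with
    | h a b =>
      have : (L.filter fun v => g v = s(a, b)) ⊆ {a, b} := by
        intro v hv
        rw [Finset.mem_filter] at hv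
        have := hgmem v hv.1
        rw [hv.2, Sym2.mem_iff] at this
        simpa using this
      calc (L.filter fun v => g v = s(a, b)).card ≤ ({a, b} : Finset V).card :=
            Finset.card_le_card this
        _ ≤ 2 := Finset.card_insert_le _ _ |>.trans (by simp)
  calc L.card ≤ 2 * (L.image g).card := Finset.card_le_mul_card_image _ _ hfib
    _ ≤ 2 * S.card := by
        exact Nat.mul_le_mul_left 2 (Finset.card_le_card himg)
    _ = 2 * (G.edgeFinset.card - T.edgeFinset.card) := by
        rw [hS, Finset.card_sdiff_of_subset hsub]
end

section
/- Let G be a connected finite simple graph in which every vertex has degree at least 2, let T be a spanning tree of G, and let t = |E(G)| − |E(T)| be the number of non-tree edges. Then the number of vertices whose degree in G is at least 3 is at most 4t. -/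
open SimpleGraph

/-- Let `G` be a connected finite simple graph with minimum degree at least
`2`, `T` a spanning tree of `G`, and `t = |E(G)| - |E(T)|` the number of non-tree edges.
Then the number of vertices of degree at least `3` in `G` is at most `4 * t`. -/
theorem stmt9 {V : Type*} [Fintype V] [DecidableEq V] (G : SimpleGraph V)
    [DecidableRel G.Adj] (hG : G.Connected) (hdeg : ∀ v, 2 ≤ G.degree v)
    (T : SimpleGraph V) [DecidableRel T.Adj] (hT : T ≤ G) (hTconn : T.Connected)
    (hTacyclic : T.IsAcyclic) :
    (Finset.univ.filter (fun v => 3 ≤ G.degree v)).card ≤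
      4 * (G.edgeFinset.card - T.edgeFinset.card) := by
  have hTree : T.IsTree := ⟨hTconn, hTacyclic⟩
  have hTcard : T.edgeFinset.card + 1 = Fintype.card V := hTree.card_edgeFinset
  have hTsub : T.edgeFinset.card ≤ G.edgeFinset.card := by
    apply Finset.card_le_card
    intro e he
    rw [SimpleGraph.mem_edgeFinset] at *
    exact SimpleGraph.edgeSet_mono hT he
  have hhand : ∑ v, G.degree v = 2 * G.edgeFinset.card :=
    G.sum_degrees_eq_twice_card_edges
  set s := Finset.univ.filter (fun v => 3 ≤ G.degree v) with hs
  have hsum : 2 * Fintype.card V + s.card ≤ ∑ v, G.degree v := by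
    have hsplit : ∑ v, G.degree v = ∑ v ∈ s, G.degree v + ∑ v ∈ sᶜ, G.degree v :=
      (Finset.sum_add_sum_compl s _).symm
    have h1 : 3 * s.card ≤ ∑ v ∈ s, G.degree v := by
      calc 3 * s.card = s.card • 3 := by rw [smul_eq_mul, mul_comm]
        _ ≤ _ := Finset.card_nsmul_le_sum s _ 3 (fun v hv => (Finset.mem_filter.mp hv).2)
    have h2 : 2 * sᶜ.card ≤ ∑ v ∈ sᶜ, G.degree v := by
      calc 2 * sᶜ.card = sᶜ.card • 2 := by rw [smul_eq_mul, mul_comm]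
        _ ≤ _ := Finset.card_nsmul_le_sum sᶜ _ 2 (fun v _ => hdeg v)
    have hcards : s.card + sᶜ.card = Fintype.card V := by
      rw [Finset.card_add_card_compl]
    omega
  omega
end

section
/- Let (H, ℓ_H) and (G, ℓ_G) be k-labeled graphs, let f : V_H → V_G be a function, and suppose that for every pair of vertices u, v with H.Adj u v there is a chosen walk w_{u,v} in G from f(u) to f(v) such that for every i : Fin k, parity_i(w_{u,v}) equals the i-th component of ℓ_H({u, v}). If H contains a cycle γ with parity_i(γ) ≠ parity_j(γ) for some i, j : Fin k, then G contains a cycle γ' with parity_i(γ') ≠ parity_j(γ'). -/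
open SimpleGraph


lemma aux_path_edge_start {V : Type*} {G : SimpleGraph V} {a b u : V} (q : G.Walk a b)
    (hq : q.IsPath) (he : s(a, u) ∈ q.edges) :
    ∃ (h : G.Adj a u) (q' : G.Walk u b), q = Walk.cons h q' := by
  cases q with
  | nil => simp at he
  | cons h' q' =>
    rename_i c
    rw [Walk.edges_cons, List.mem_cons] at he
    rcases he with he | he
    · rw [Sym2.eq_iff] at he
      rcases he with ⟨-, rfl⟩ | ⟨h1, h2⟩
      · exact ⟨h', q', rfl⟩
      · exfalso
        apply ((Walk.cons_isPath_iff _ _).mp hq).2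
        rw [h1]
        exact Walk.start_mem_support q'
    · exfalso
      exact ((Walk.cons_isPath_iff _ _).mp hq).2 (Walk.fst_mem_support_of_mem_edges q' he)

lemma aux_closed_path_nil {V : Type*} {G : SimpleGraph V} {y : V} (q : G.Walk y y)
    (hq : q.IsPath) : q = Walk.nil := by
  cases q with
  | nil => rfl
  | cons h' q' =>
    exfalso
    have hnd := (Walk.isPath_def _).mp hq
    rw [Walk.support_cons, List.nodup_cons] at hnd
    exact hnd.1 (Walk.end_mem_support q')

/-- key lemma: if every cycle has zero `g`-sum, every closed walk has zero `g`-sum. -/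
lemma closed_walk_sum_zero {V : Type*} (G : SimpleGraph V) (g : Sym2 V → ZMod 2)
    (hcyc : ∀ (y : V) (c : G.Walk y y), c.IsCycle → (c.edges.map g).sum = 0) :
    ∀ (n : ℕ) (x : V) (c : G.Walk x x), c.length ≤ n → (c.edges.map g).sum = 0 := by
  classical
  intro n
  induction n with
  | zero =>
    intro x c hc
    have h0 : c.length = 0 := Nat.le_zero.mp hc
    cases c with
    | nil => simp
    | cons h p => simp at h0
  | succ n ih =>
    intro x c hc
    rcases Nat.lt_or_ge c.length (n+1) with hlt | hge
    · exact ih x c (Nat.lt_succ_iff.mp hlt)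
    have hlen : c.length = n + 1 := le_antisymm hc hge
    by_cases hnd : c.support.tail.Nodup
    · -- almost a cycle
      cases c with
      | nil => simp
      | cons h p =>
        rename_i y
        have hpnd : p.support.Nodup := by simpa using hnd
        have hp : p.IsPath := (Walk.isPath_def p).mpr hpnd
        by_cases he : s(x, y) ∈ p.edges
        · -- the walk is x → y → x
          have he' : s(x, y) ∈ p.reverse.edges := by
            rw [Walk.edges_reverse, List.mem_reverse]; exact he
          obtain ⟨h2, q', hq⟩ := aux_path_edge_start p.reverse hp.reverse he'
          have hq' : q' = Walk.nil := by
            apply aux_closed_path_nil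
            have := hp.reverse
            rw [hq] at this
            exact this.of_cons
          rw [hq'] at hq
          have hpe : p.edges = [s(x, y)] := by
            have : p.reverse.edges = p.edges.reverse := Walk.edges_reverse p
            rw [hq] at this
            simpa using (List.reverse_reverse p.edges ▸ congrArg List.reverse this.symm)
          rw [Walk.edges_cons, hpe]
          simp [CharTwo.add_self_eq_zero]
        · have : (Walk.cons h p).IsCycle := (Walk.cons_isCycle_iff p h).mpr ⟨hp, he⟩
          exact hcyc _ _ this
    · -- duplicate vertex in the tail: rotate and split
      obtain ⟨u, hu⟩ := List.exists_duplicate_iff_not_nodup.mpr hnd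
      have hcount : 2 ≤ c.support.tail.count u := List.duplicate_iff_two_le_count.mp hu
      have hu' : u ∈ c.support := List.mem_of_mem_tail hu.mem
      set d := c.rotate u hu' with hd
      have hsum_eq : (d.edges.map g).sum = (c.edges.map g).sum :=
        ((c.rotate_edges u hu').perm.map g).sum_eq
      have hdcount : 2 ≤ d.support.tail.count u := by
        rwa [((c.support_rotate u hu').perm.count_eq u)]
      have hdlen : d.length = n + 1 := by
        have := congrArg Walk.length (c.take_spec hu')
        rw [Walk.length_append] at this
        rw [hd]
        simp only [Walk.rotate, Walk.length_append]
        omega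
      rw [← hsum_eq]
      cases hdd : d with
      | nil => rw [hdd] at hdlen; simp at hdlen
      | cons h' d' =>
        rename_i v
        have hd'count : 2 ≤ d'.support.count u := by
          rw [hdd] at hdcount
          simpa using hdcount
        have hu2 : u ∈ d'.support := List.count_pos_iff.mp (by omega)
        set c1 := d'.takeUntil u hu2 with hc1
        set c2 := d'.dropUntil u hu2 with hc2
        have hspec : c1.append c2 = d' := d'.take_spec hu2
        have hcnt1 : c1.support.count u = 1 := d'.count_support_takeUntil_eq_one hu2
        have hcnt2 : 1 ≤ c2.support.tail.count u := by
          have : d'.support = c1.support ++ c2.support.tail := by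
            rw [← hspec, Walk.support_append]
          rw [this, List.count_append] at hd'count
          omega
        have hc2len : 1 ≤ c2.length := by
          have htne : c2.support.tail ≠ [] := by
            intro hnil; rw [hnil] at hcnt2; simp at hcnt2
          have : c2.support.length = c2.length + 1 := Walk.length_support c2
          have : c2.support.tail.length = c2.length := by
            rw [List.length_tail, this]; omega
          have hpos : 0 < c2.support.tail.length := List.length_pos_iff.mpr htne
          omega
        have hlensum : c1.length + c2.length = n := by
          have := congrArg Walk.length hspec
          rw [Walk.length_append] at this
          rw [hdd] at hdlen
          simp only [Walk.length_cons] at hdlen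
          omega
        have h1 : ((Walk.cons h' c1).edges.map g).sum = 0 := by
          apply ih u (Walk.cons h' c1)
          simp only [Walk.length_cons]
          omega
        have h2 : (c2.edges.map g).sum = 0 := ih u c2 (by omega)
        have : (Walk.cons h' d').edges = (Walk.cons h' c1).edges ++ c2.edges := by
          rw [← hspec]
          simp [Walk.edges_append]
        rw [this, List.map_append, List.sum_append, h1, h2, add_zero]

/-- map a walk of `H` to a walk of `G` by concatenating the chosen walks. -/
def mapW {VH VG : Type*} {H : SimpleGraph VH} {G : SimpleGraph VG} (f : VH → VG)
    (w : ∀ u v, H.Adj u v → G.Walk (f u) (f v)) :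
    ∀ {a b : VH}, H.Walk a b → G.Walk (f a) (f b)
  | _, _, .nil => .nil
  | _, _, .cons h p => (w _ _ h).append (mapW f w p)

lemma mapW_sum {VH VG : Type*} {H : SimpleGraph VH} {G : SimpleGraph VG} (f : VH → VG)
    (w : ∀ u v, H.Adj u v → G.Walk (f u) (f v))
    (gG : Sym2 VG → ZMod 2) (gH : Sym2 VH → ZMod 2)
    (hw : ∀ u v (h : H.Adj u v), (((w u v h).edges.map gG)).sum = gH s(u, v))
    {a b : VH} (p : H.Walk a b) :
    (((mapW f w p).edges.map gG)).sum = ((p.edges.map gH)).sum := by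
  induction p with
  | nil => simp [mapW]
  | cons h p ihp =>
    simp only [mapW, Walk.edges_append, List.map_append, List.sum_append, Walk.edges_cons,
      List.map_cons, List.sum_cons, ihp, hw]


/-- If `(f, w)` is a parity-preserving mapping from the `k`-labeled graph
`(H, ℓH)` to the `k`-labeled graph `(G, ℓG)`, and `H` contains a cycle whose `i`-th and
`j`-th parities differ, then so does `G`. -/
theorem stmt10 {VH VG : Type*} {k : ℕ}
    (H : SimpleGraph VH) (ℓH : Sym2 VH → Fin k → ZMod 2)
    (G : SimpleGraph VG) (ℓG : Sym2 VG → Fin k → ZMod 2)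
    (f : VH → VG) (w : ∀ u v, H.Adj u v → G.Walk (f u) (f v))
    (hw : ∀ (u v : VH) (h : H.Adj u v) (i : Fin k),
        (((w u v h).edges.map (fun e => ℓG e i)).sum) = ℓH s(u, v) i)
    (i j : Fin k)
    (hγ : ∃ (x : VH) (γ : H.Walk x x), γ.IsCycle ∧
        (γ.edges.map (fun e => ℓH e i)).sum ≠ (γ.edges.map (fun e => ℓH e j)).sum) :
    ∃ (y : VG) (γ' : G.Walk y y), γ'.IsCycle ∧
      (γ'.edges.map (fun e => ℓG e i)).sum ≠ (γ'.edges.map (fun e => ℓG e j)).sum := by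
  by_contra hcon
  push_neg at hcon
  obtain ⟨x, γ, hγc, hγne⟩ := hγ
  set g : Sym2 VG → ZMod 2 := fun e => ℓG e i + ℓG e j with hg
  have hsum_split : ∀ {a b : VG} (p : G.Walk a b),
      (p.edges.map g).sum = (p.edges.map (fun e => ℓG e i)).sum
        + (p.edges.map (fun e => ℓG e j)).sum := by
    intro a b p
    induction p with
    | nil => simp
    | cons h p ihp => simp [ihp, hg]; ring
  have hcyc : ∀ (y : VG) (c : G.Walk y y), c.IsCycle → (c.edges.map g).sum = 0 := by
    intro y c hcY
    rw [hsum_split, hcon y c hcY, CharTwo.add_self_eq_zero]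
  have hzero := closed_walk_sum_zero G g hcyc (mapW f w γ).length (f x) (mapW f w γ) le_rfl
  have hHi := mapW_sum f w (fun e => ℓG e i) (fun e => ℓH e i) (fun u v h => hw u v h i) γ
  have hHj := mapW_sum f w (fun e => ℓG e j) (fun e => ℓH e j) (fun u v h => hw u v h j) γ
  rw [hsum_split, hHi, hHj] at hzero
  apply hγne
  have := eq_neg_of_add_eq_zero_left hzero
  rwa [CharTwo.neg_eq] at this
end

section
/- Let k ≥ 1, let (G, ℓ) be a k-labeled graph on a finite vertex type, and let P be a set of pairs of elements of Fin k. Suppose G is P-good, but for every edge e of G the graph obtained from G by deleting e is not P-good. Then for every spanning forest F of G, the number of edges of G that are not edges of F is strictly less than k. -/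
open SimpleGraph

private lemma sum_map_add' {α : Type*} (f g : α → ZMod 2) :
    ∀ (l : List α), (l.map (fun x => f x + g x)).sum = (l.map f).sum + (l.map g).sum
  | [] => by simp
  | x :: l => by
      simp only [List.map_cons, List.sum_cons, sum_map_add' f g l]; ring

private lemma loop_path_nil {V : Type*} {G : SimpleGraph V} {v : V} (q : G.Walk v v)
    (hq : q.IsPath) : q = Walk.nil := by
  cases q with
  | nil => rfl
  | cons h q' =>
    exfalso
    exact (Walk.cons_isPath_iff _ _).mp hq |>.2 (q'.end_mem_support)

private lemma path_edge_loop {V : Type*} {G : SimpleGraph V} {u v : V} (q : G.Walk u v)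
    (hq : q.IsPath) (he : s(v, u) ∈ q.edges) : q.edges = [s(u, v)] := by
  cases q with
  | nil => simp at he
  | cons h q' =>
    rename_i w
    rw [Walk.edges_cons] at he ⊢
    rcases List.mem_cons.mp he with heq | hmem
    · rw [Sym2.eq_iff] at heq
      rcases heq with ⟨h1, h2⟩ | ⟨h1, h2⟩
      · exact absurd h2 h.ne
      · subst h1
        have hnil := loop_path_nil q' ((Walk.cons_isPath_iff _ _).mp hq).1
        subst hnil
        simp
    · exfalso
      have hu : u ∈ q'.support := q'.snd_mem_support_of_mem_edges hmem
      exact ((Walk.cons_isPath_iff _ _).mp hq).2 hu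

private lemma balanced_closed_walk {V : Type*} [DecidableEq V] {H : SimpleGraph V}
    (φ : Sym2 V → ZMod 2)
    (hcyc : ∀ (v : V) (γ : H.Walk v v), γ.IsCycle → (γ.edges.map φ).sum = 0) :
    ∀ (n : ℕ) (v : V) (w : H.Walk v v), w.length ≤ n → (w.edges.map φ).sum = 0 := by
  have hself : ∀ a : ZMod 2, a + a = 0 := by decide
  intro n
  induction n with
  | zero =>
    intro v w hw
    cases w with
    | nil => simp
    | cons h q => simp [Walk.length_cons] at hw
  | succ n ih =>
    intro v w hlen
    cases w with
    | nil => simp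
    | cons h q =>
      rename_i u
      by_cases hnd : q.support.Nodup
      · have hqp : q.IsPath := (Walk.isPath_def q).mpr hnd
        by_cases hevu : s(v, u) ∈ q.edges
        · have hq1 := path_edge_loop q hqp hevu
          rw [Walk.edges_cons, List.map_cons, List.sum_cons, hq1]
          simp only [List.map_cons, List.map_nil, List.sum_cons, List.sum_nil, add_zero]
          rw [Sym2.eq_swap (a := u) (b := v)]
          exact hself _
        · exact hcyc v (Walk.cons h q) ((Walk.cons_isCycle_iff q h).mpr ⟨hqp, hevu⟩)
      · obtain ⟨u', hdup⟩ := List.exists_duplicate_iff_not_nodup.mpr hnd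
        have hcount : 2 ≤ q.support.count u' := List.duplicate_iff_two_le_count.mp hdup
        have hu' : u' ∈ (Walk.cons h q).support := by
          rw [Walk.support_cons]
          exact List.mem_cons_of_mem _ hdup.mem
        have key : ∀ (w' : H.Walk u' u'), w'.length = (Walk.cons h q).length →
            2 ≤ w'.support.tail.count u' → (w'.edges.map φ).sum = 0 := by
          intro w' hlen' hcnt
          cases w' with
          | nil => simp at hcnt
          | cons h₂ q₂ =>
            rename_i u₃
            rw [Walk.support_cons, List.tail_cons] at hcnt
            have hm : u' ∈ q₂.support := List.count_pos_iff.mp (by omega)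
            have hspec : (q₂.takeUntil u' hm).append (q₂.dropUntil u' hm) = q₂ :=
              q₂.take_spec hm
            have htc : (q₂.takeUntil u' hm).support.count u' = 1 :=
              q₂.count_support_takeUntil_eq_one hm
            have hsupp : q₂.support
                = (q₂.takeUntil u' hm).support ++ (q₂.dropUntil u' hm).support.tail := by
              conv_lhs => rw [← hspec]
              rw [Walk.support_append]
            have hm2 : u' ∈ (q₂.dropUntil u' hm).support.tail := by
              rw [hsupp, List.count_append] at hcnt
              exact List.count_pos_iff.mp (by omega)
            have hdlen : 1 ≤ (q₂.dropUntil u' hm).length := by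
              have h1 := List.length_pos_of_mem hm2
              rw [List.length_tail, Walk.length_support] at h1
              omega
            have hql : q₂.length = (q₂.takeUntil u' hm).length + (q₂.dropUntil u' hm).length := by
              conv_lhs => rw [← hspec]
              rw [Walk.length_append]
            have hlentot : (Walk.cons h₂ q₂).length ≤ n + 1 := by rw [hlen']; exact hlen
            rw [Walk.length_cons] at hlentot
            have s1 := ih u' (Walk.cons h₂ (q₂.takeUntil u' hm))
              (by rw [Walk.length_cons]; omega)
            have s2 := ih u' (q₂.dropUntil u' hm) (by omega)
            rw [Walk.edges_cons, List.map_cons, List.sum_cons]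
            conv_lhs => rw [← hspec]
            rw [Walk.edges_append, List.map_append, List.sum_append]
            rw [Walk.edges_cons, List.map_cons, List.sum_cons] at s1
            rw [s2, add_zero]
            exact s1
        have hperm : List.Perm (((Walk.cons h q).rotate u' hu').edges) ((Walk.cons h q).edges) :=
          ((Walk.cons h q).rotate_edges u' hu').perm
        have hlenr : ((Walk.cons h q).rotate u' hu').length = (Walk.cons h q).length := by
          have h1 := hperm.length_eq
          rwa [Walk.length_edges, Walk.length_edges] at h1
        have hcntr : 2 ≤ ((Walk.cons h q).rotate u' hu').support.tail.count u' := by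
          have h1 := ((Walk.cons h q).support_rotate u' hu').perm.count_eq u'
          rw [h1, Walk.support_cons, List.tail_cons]
          exact hcount
        have h0 := key _ hlenr hcntr
        rw [← (hperm.map φ).sum_eq]
        exact h0

private lemma edge_at_end {V : Type*} {G : SimpleGraph V} {y : V} {u x : V} (q : G.Walk u x) :
    x ∉ q.support.dropLast → s(x, y) ∈ q.edges →
      ∃ q₁ : G.Walk u y, q.edges = q₁.edges ++ [s(x, y)] := by
  induction q with
  | nil => intro _ he; simp at he
  | @cons a m b h q' ih =>
    intro hx he
    have hsne := q'.support_ne_nil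
    have hdrop : (Walk.cons h q').support.dropLast = a :: q'.support.dropLast := by
      rw [Walk.support_cons]
      cases hsq : q'.support with
      | nil => exact absurd hsq hsne
      | cons c l => rfl
    rw [hdrop] at hx
    have hxa : b ≠ a := fun hh => hx (hh ▸ List.mem_cons_self)
    have hx' : b ∉ q'.support.dropLast := fun hh => hx (List.mem_cons_of_mem _ hh)
    rw [Walk.edges_cons] at he
    rcases List.mem_cons.mp he with heq | hmem
    · have heq0 := heq
      rw [Sym2.eq_iff] at heq
      rcases heq with ⟨h1, h2⟩ | ⟨h1, h2⟩
      · exact absurd h1 hxa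
      · subst h1
        subst h2
        cases q' with
        | nil =>
          refine ⟨Walk.nil, ?_⟩
          rw [Walk.edges_cons, Walk.edges_nil, heq0]
          simp
        | cons h₃ q₃ =>
          exfalso
          apply hx'
          rw [Walk.support_cons]
          have h3ne := q₃.support_ne_nil
          cases hsq : q₃.support with
          | nil => exact absurd hsq h3ne
          | cons c l => exact List.mem_cons_self
    · obtain ⟨q₁', hq₁⟩ := ih hx' hmem
      exact ⟨Walk.cons h q₁', by rw [Walk.edges_cons, Walk.edges_cons, hq₁, List.cons_append]⟩

private lemma cycle_extract {V : Type*} {G : SimpleGraph V} {x y : V} {γ : G.Walk x x}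
    (hc : γ.IsCycle) (hmem : s(x, y) ∈ γ.edges) (φ : Sym2 V → ZMod 2) :
    ∃ q : G.Walk y x, s(x, y) ∉ q.edges ∧
      (γ.edges.map φ).sum = φ s(x, y) + (q.edges.map φ).sum := by
  cases γ with
  | nil => simp at hmem
  | cons h q =>
    rename_i u
    have hnodup : ((Walk.cons h q).edges).Nodup := hc.edges_nodup
    rw [Walk.edges_cons] at hmem hnodup
    rcases List.mem_cons.mp hmem with heq | hmem'
    · have hyu : y = u := by
        rw [Sym2.eq_iff] at heq
        rcases heq with ⟨h1, h2⟩ | ⟨h1, h2⟩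
        · exact h2
        · exact absurd h1 h.ne
      subst hyu
      refine ⟨q, (List.nodup_cons.mp hnodup).1, ?_⟩
      rw [Walk.edges_cons, List.map_cons, List.sum_cons]
    · have hnd : q.support.Nodup := by
        have h1 := hc.support_nodup
        rwa [Walk.support_cons, List.tail_cons] at h1
      have hxq : x ∉ q.support.dropLast := by
        intro hxd
        have hgl : q.support.getLast q.support_ne_nil = x := q.getLast_support
        have hsplit := List.dropLast_append_getLast q.support_ne_nil
        rw [← hsplit] at hnd
        have hdisj := (List.nodup_append'.mp hnd).2.2
        exact hdisj hxd (by rw [hgl]; exact List.mem_singleton_self _)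
      obtain ⟨q₁, hq₁⟩ := edge_at_end q hxq hmem'
      refine ⟨(Walk.cons h q₁).reverse, ?_, ?_⟩
      · rw [Walk.edges_reverse, List.mem_reverse, Walk.edges_cons]
        rw [hq₁] at hnodup
        intro hmem''
        rcases List.mem_cons.mp hmem'' with h1 | h2
        · exact (List.nodup_cons.mp hnodup).1
            (h1 ▸ (List.mem_append_right _ (List.mem_singleton_self _)))
        · have hnd2 := (List.nodup_cons.mp hnodup).2
          exact (List.nodup_append'.mp hnd2).2.2 h2 (List.mem_singleton_self _)
      · rw [Walk.edges_reverse, List.map_reverse, List.sum_reverse]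
        rw [Walk.edges_cons, List.map_cons, List.sum_cons, hq₁, List.map_append,
          List.sum_append, List.map_cons, List.sum_cons]
        rw [Walk.edges_cons, List.map_cons, List.sum_cons]
        simp only [List.map_nil, List.sum_nil, add_zero]
        ring
private lemma z2_self : ∀ a : ZMod 2, a + a = 0 := by decide
private lemma z2_ne : ∀ a b : ZMod 2, a ≠ b ↔ a + b = 1 := by decide
private lemma z2_addz : ∀ a b : ZMod 2, a + b = 0 → a = b := by decide

/-- If a `k`-labeled graph `(G, ℓ)` (with `k ≥ 1`) on a finite vertex type
is `P`-good but deleting any edge destroys `P`-goodness, then for every spanning forest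
`F` of `G` the number of non-forest edges of `G` is strictly less than `k`. -/
theorem stmt11 {V : Type*} [Fintype V] [DecidableEq V] {k : ℕ} (hk : 1 ≤ k)
    (G : SimpleGraph V) [DecidableRel G.Adj] (ℓ : Sym2 V → Fin k → ZMod 2)
    (P : Set (Fin k × Fin k))
    (hgood : ∀ p ∈ P, ∃ (v : V) (γ : G.Walk v v), γ.IsCycle ∧
        (γ.edges.map (fun e => ℓ e p.1)).sum ≠ (γ.edges.map (fun e => ℓ e p.2)).sum)
    (hmin : ∀ e ∈ G.edgeSet,
        ¬ (∀ p ∈ P, ∃ (v : V) (γ : (G.deleteEdges {e}).Walk v v), γ.IsCycle ∧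
            (γ.edges.map (fun e' => ℓ e' p.1)).sum ≠
            (γ.edges.map (fun e' => ℓ e' p.2)).sum))
    (F : SimpleGraph V) [DecidableRel F.Adj] (hF : F ≤ G) (hFacyclic : F.IsAcyclic)
    (hFspan : ∀ u v : V, F.Reachable u v ↔ G.Reachable u v) :
    (G.edgeFinset \ F.edgeFinset).card < k := by
  classical
  haveI : Fact (Nat.Prime 2) := ⟨Nat.prime_two⟩
  have hself : ∀ a : ZMod 2, a + a = 0 := z2_self
  have hne1 : ∀ a b : ZMod 2, a ≠ b ↔ a + b = 1 := z2_ne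
  have haddz : ∀ a b : ZMod 2, a + b = 0 → a = b := z2_addz
  set S : Finset (Sym2 V) := G.edgeFinset \ F.edgeFinset with hS
  have hSmem : ∀ f : ↥S, (f : Sym2 V) ∈ G.edgeSet ∧ (f : Sym2 V) ∉ F.edgeSet := by
    intro f
    have h2 : (f : Sym2 V) ∈ G.edgeFinset \ F.edgeFinset := f.2
    rw [Finset.mem_sdiff, mem_edgeFinset, mem_edgeFinset] at h2
    exact h2
  have ST1 : ∀ f : ↥S, ∃ (x y : V) (r : G.Walk y x), G.Adj x y ∧ (f : Sym2 V) = s(x, y) ∧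
      r.IsPath ∧ ∀ e' ∈ r.edges, e' ∈ F.edgeSet := by
    intro f
    obtain ⟨hfG, hfF⟩ := hSmem f
    obtain ⟨x, y, hxy⟩ : ∃ x y, (f : Sym2 V) = s(x, y) := by
      induction (f : Sym2 V) using Sym2.ind with
      | _ a b => exact ⟨a, b, rfl⟩
    have hadj : G.Adj x y := by rw [← mem_edgeSet, ← hxy]; exact hfG
    have hreach : F.Reachable y x := (hFspan y x).mpr hadj.symm.reachable
    obtain ⟨w0⟩ := hreach
    have hsub : ∀ e' ∈ (w0.toPath : F.Walk y x).edges, e' ∈ G.edgeSet := fun e' he' =>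
      (edgeSet_subset_edgeSet.mpr hF) ((w0.toPath : F.Walk y x).edges_subset_edgeSet he')
    refine ⟨x, y, (w0.toPath : F.Walk y x).transfer G hsub, hadj, hxy, ?_, ?_⟩
    · exact (w0.toPath).2.transfer hsub
    · intro e' he'
      rw [Walk.edges_transfer] at he'
      exact (w0.toPath : F.Walk y x).edges_subset_edgeSet he'
  choose xx yy rr hadj heq hrpath hrF using ST1
  have ST2 : ∀ f : ↥S, ∃ p : Fin k × Fin k, p ∈ P ∧ ∀ (v : V)
      (γ : (G.deleteEdges {(f : Sym2 V)}).Walk v v), γ.IsCycle →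
      (γ.edges.map (fun e' => ℓ e' p.1)).sum = (γ.edges.map (fun e' => ℓ e' p.2)).sum := by
    intro f
    have h0 := hmin (f : Sym2 V) (hSmem f).1
    push_neg at h0
    obtain ⟨p, hpP, hball⟩ := h0
    exact ⟨p, hpP, fun v γ hγ => hball v γ hγ⟩
  choose pp hpP hbal using ST2
  set φ : ↥S → Sym2 V → ZMod 2 := fun f e' => ℓ e' (pp f).1 + ℓ e' (pp f).2 with hφ
  set c : ↥S → Fin k → ZMod 2 :=
    fun f i => ℓ (f : Sym2 V) i + ((rr f).edges.map (fun e' => ℓ e' i)).sum with hc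
  have hcycφ : ∀ (e : ↥S) (v : V) (γ : (G.deleteEdges {(e : Sym2 V)}).Walk v v),
      γ.IsCycle → (γ.edges.map (φ e)).sum = 0 := by
    intro e v γ hγ
    simp only [hφ]
    rw [sum_map_add', hbal e v γ hγ]
    exact hself _
  have hCcyc : ∀ f : ↥S, (Walk.cons (hadj f) (rr f)).IsCycle := by
    intro f
    refine (Walk.cons_isCycle_iff _ _).mpr ⟨hrpath f, fun hmem => ?_⟩
    exact (hSmem f).2 (by rw [heq f]; exact hrF f _ hmem)
  have hCsum : ∀ (e f : ↥S), ((Walk.cons (hadj f) (rr f)).edges.map (φ e)).sum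
      = c f (pp e).1 + c f (pp e).2 := by
    intro e f
    rw [Walk.edges_cons, List.map_cons, List.sum_cons]
    simp only [hφ, hc]
    rw [sum_map_add', heq f]
    ring
  have hpair : ∀ e f : ↥S, c f (pp e).1 + c f (pp e).2 = if e = f then 1 else 0 := by
    intro e f
    by_cases hef : e = f
    · subst hef
      rw [if_pos rfl]
      obtain ⟨v, γ, hγc, hγne⟩ := hgood (pp e) (hpP e)
      have hγ1 : (γ.edges.map (φ e)).sum = 1 := by
        simp only [hφ]
        rw [sum_map_add']
        exact (hne1 _ _).mp hγne
      by_cases hmem : (e : Sym2 V) ∈ γ.edges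
      · have hmemxy : s(xx e, yy e) ∈ γ.edges := heq e ▸ hmem
        have hx : xx e ∈ γ.support := γ.fst_mem_support_of_mem_edges hmemxy
        have hrot := γ.rotate_edges (xx e) hx
        have hγc' : (γ.rotate (xx e) hx).IsCycle := hγc.rotate hx
        have hmem' : s(xx e, yy e) ∈ (γ.rotate (xx e) hx).edges := hrot.perm.mem_iff.mpr hmemxy
        have hsum' : ((γ.rotate (xx e) hx).edges.map (φ e)).sum = 1 := by
          rw [(hrot.perm.map (φ e)).sum_eq]; exact hγ1
        obtain ⟨q, hqe, hqsum⟩ := cycle_extract hγc' hmem' (φ e)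
        have hqno : ∀ e' ∈ q.edges, e' ∉ ({(e : Sym2 V)} : Set (Sym2 V)) := by
          intro e' he' hm
          rw [Set.mem_singleton_iff] at hm
          subst hm
          exact hqe (by rw [← heq e]; exact he')
        have hrno : ∀ e' ∈ (rr e).edges, e' ∉ ({(e : Sym2 V)} : Set (Sym2 V)) := by
          intro e' he' hm
          rw [Set.mem_singleton_iff] at hm
          subst hm
          exact (hSmem e).2 (hrF e _ he')
        have h0 := balanced_closed_walk (φ e) (hcycφ e)
          (((q.toDeleteEdges ({(e : Sym2 V)} : Set (Sym2 V)) hqno).append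
            ((rr e).toDeleteEdges ({(e : Sym2 V)} : Set (Sym2 V)) hrno).reverse).length) _
          ((q.toDeleteEdges ({(e : Sym2 V)} : Set (Sym2 V)) hqno).append
            ((rr e).toDeleteEdges ({(e : Sym2 V)} : Set (Sym2 V)) hrno).reverse) le_rfl
        rw [Walk.edges_append, List.map_append, List.sum_append, Walk.edges_reverse,
          List.map_reverse, List.sum_reverse, Walk.edges_transfer, Walk.edges_transfer] at h0
        have heqsum : (q.edges.map (φ e)).sum = ((rr e).edges.map (φ e)).sum :=
          haddz _ _ h0
        have hfin : φ e (s(xx e, yy e)) + ((rr e).edges.map (φ e)).sum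
            = c e (pp e).1 + c e (pp e).2 := by
          simp only [hφ, hc]
          rw [sum_map_add', heq e]
          ring
        calc c e (pp e).1 + c e (pp e).2
            = φ e (s(xx e, yy e)) + ((rr e).edges.map (φ e)).sum := hfin.symm
          _ = φ e (s(xx e, yy e)) + (q.edges.map (φ e)).sum := by rw [heqsum]
          _ = ((γ.rotate (xx e) hx).edges.map (φ e)).sum := hqsum.symm
          _ = 1 := hsum'
      · exfalso
        have hno : ∀ e' ∈ γ.edges, e' ∉ ({(e : Sym2 V)} : Set (Sym2 V)) := by
          intro e' he' hm
          rw [Set.mem_singleton_iff] at hm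
          subst hm
          exact hmem he'
        have h0 := hcycφ e _ _ (Walk.IsCycle.toDeleteEdges G ({(e : Sym2 V)} : Set (Sym2 V)) hγc hno)
        rw [Walk.edges_transfer] at h0
        rw [h0] at hγ1
        exact zero_ne_one hγ1
    · rw [if_neg hef, ← hCsum e f]
      have hno : ∀ e' ∈ (Walk.cons (hadj f) (rr f)).edges,
          e' ∉ ({(e : Sym2 V)} : Set (Sym2 V)) := by
        intro e' he' hm
        rw [Set.mem_singleton_iff] at hm
        subst hm
        rw [Walk.edges_cons] at he'
        rcases List.mem_cons.mp he' with h1 | h2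
        · exact hef (Subtype.ext (by rw [h1, ← heq f]))
        · exact (hSmem e).2 (hrF f _ h2)
      have h0 := hcycφ e _ _ (Walk.IsCycle.toDeleteEdges G ({(e : Sym2 V)} : Set (Sym2 V)) (hCcyc f) hno)
      rwa [Walk.edges_transfer] at h0
  -- linear algebra
  let σ : (Fin k → ZMod 2) →ₗ[ZMod 2] ZMod 2 :=
    { toFun := fun w => ∑ i, w i
      map_add' := fun a b => by simp [Finset.sum_add_distrib]
      map_smul' := fun m a => by simp [Finset.mul_sum] }
  let a : ↥S → (Fin k → ZMod 2) := fun e => (Pi.single (pp e).1 1 : Fin k → ZMod 2) + (Pi.single (pp e).2 1 : Fin k → ZMod 2)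
  have hσa : ∀ e, σ (a e) = 0 := by
    intro e
    show (∑ i, ((Pi.single (pp e).1 1 : Fin k → ZMod 2) + (Pi.single (pp e).2 1 : Fin k → ZMod 2)) i) = 0
    simp only [Pi.add_apply]
    rw [Finset.sum_add_distrib, Finset.sum_pi_single', Finset.sum_pi_single']
    simp [hself]
  have hone : ∀ (j : Fin k) (w : Fin k → ZMod 2),
      (∑ i, (Pi.single j (1 : ZMod 2) : Fin k → ZMod 2) i * w i) = w j := by
    intro j w
    rw [Finset.sum_eq_single j]
    · simp
    · intro b _ hb
      rw [Pi.single_eq_of_ne hb, zero_mul]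
    · intro hj
      exact absurd (Finset.mem_univ j) hj
  have hTa : ∀ e f : ↥S, (∑ i, a e i * c f i) = (if e = f then 1 else 0) := by
    intro e f
    have h1 : (∑ i, a e i * c f i) = c f (pp e).1 + c f (pp e).2 := by
      simp only [a, Pi.add_apply, add_mul]
      rw [Finset.sum_add_distrib, hone, hone]
    rw [h1, hpair e f]
  have hli : LinearIndependent (ZMod 2) a := by
    rw [Fintype.linearIndependent_iff]
    intro g hg f
    have h1 : (∑ i, (∑ e : ↥S, g e • a e) i * c f i) = 0 := by rw [hg]; simp
    simp only [Finset.sum_apply, Pi.smul_apply, smul_eq_mul, Finset.sum_mul] at h1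
    rw [Finset.sum_comm] at h1
    have h3 : ∀ e : ↥S, (∑ i, g e * a e i * c f i) = g e * (if e = f then 1 else 0) := by
      intro e
      rw [← hTa e f, Finset.mul_sum]
      exact Finset.sum_congr rfl (fun i _ => by ring)
    rw [Finset.sum_congr rfl (fun e _ => h3 e)] at h1
    simp only [mul_ite, mul_one, mul_zero] at h1
    rwa [Finset.sum_ite_eq' Finset.univ f g, if_pos (Finset.mem_univ f)] at h1
  have haker : ∀ e, a e ∈ LinearMap.ker σ := fun e => LinearMap.mem_ker.mpr (hσa e)
  have hli' : LinearIndependent (ZMod 2) (fun e : ↥S => (⟨a e, haker e⟩ : LinearMap.ker σ)) :=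
    LinearIndependent.of_comp ((LinearMap.ker σ).subtype) hli
  have hcard : Fintype.card ↥S ≤ Module.finrank (ZMod 2) (LinearMap.ker σ) :=
    hli'.fintype_card_le_finrank
  have hsurj : Function.Surjective σ := by
    intro z
    refine ⟨(Pi.single (⟨0, hk⟩ : Fin k) z : Fin k → ZMod 2), ?_⟩
    show (∑ i, (Pi.single (⟨0, hk⟩ : Fin k) z : Fin k → ZMod 2) i) = z
    rw [Finset.sum_pi_single']
    simp
  have hrank := LinearMap.finrank_range_add_finrank_ker σ
  rw [LinearMap.range_eq_top.mpr hsurj, finrank_top, Module.finrank_self,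
    Module.finrank_fintype_fun_eq_card, Fintype.card_fin] at hrank
  have hcard2 : S.card = Fintype.card ↥S := (Fintype.card_coe S).symm
  omega
end

section
/- Let G be a simple graph on a finite vertex type V and let ℓ : Fin p → Sym2 V → ZMod 2 be a family of p edge-labelings. Call a simple graph G' on V with G' ≤ G well-behaved if for every i : Fin p there exists a cycle of G' whose label sum with respect to ℓ i equals 1. Suppose G is well-behaved, but for every edge e of G the graph obtained from G by deleting e is not well-behaved. Then for every spanning forest F of G, the number of edges of G that are not edges of F is at most p. -/
open SimpleGraph

private lemma edge_at_end_s12 {V : Type*} {H : SimpleGraph V} {b : V} :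
    ∀ {c a : V} (t : H.Walk c a), t.IsPath → a ≠ c → s(a, b) ∈ t.edges →
      ∃ q : H.Walk c b, t.edges = q.edges ++ [s(a, b)] ∧ t.support = q.support ++ [a] := by
  intro c a t
  induction t with
  | nil => intro _ _ h; simp at h
  | @cons u z w h₂ t₂ ih =>
    intro hp hac he
    rw [Walk.edges_cons, List.mem_cons] at he
    rcases he with he | he
    · rw [Sym2.eq_iff] at he
      rcases he with ⟨h1, h2⟩ | ⟨h1, h2⟩
      · exact absurd h1 hac
      · subst h1; subst h2
        have ht2 : t₂ = Walk.nil := (Walk.isPath_iff_eq_nil (p := t₂)).mp hp.of_cons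
        subst ht2
        exact ⟨Walk.nil, by simp [Sym2.eq_swap], by simp⟩
    · have haz : w ≠ z := by
        rintro rfl
        have ht2 : t₂ = Walk.nil := (Walk.isPath_iff_eq_nil (p := t₂)).mp hp.of_cons
        subst ht2
        simp at he
      obtain ⟨q₂, hq₂, hq₂s⟩ := ih hp.of_cons haz he
      exact ⟨Walk.cons h₂ q₂, by simp [hq₂], by simp [hq₂s]⟩

private lemma sum_split (a b : ZMod 2) (h : a + b = 1) : a = 1 ∨ b = 1 := by
  revert h; revert a b; decide

private lemma odd_closed_walk {V : Type*} [DecidableEq V] {H : SimpleGraph V}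
    (ℓ' : Sym2 V → ZMod 2) :
    ∀ (n : ℕ) (v : V) (w : H.Walk v v), w.length ≤ n → (w.edges.map ℓ').sum = 1 →
      ∃ (u : V) (c : H.Walk u u), c.IsCycle ∧ (c.edges.map ℓ').sum = 1 := by
  intro n
  induction n with
  | zero =>
    intro v w hl hs
    cases w with
    | nil => simp at hs
    | cons h t => simp [Walk.length_cons] at hl
  | succ n ih =>
    intro v w hl hs
    cases w with
    | nil => simp at hs
    | @cons _ y _ h t =>
      by_cases hnd : t.support.Nodup
      · have hp : t.IsPath := (Walk.isPath_def t).mpr hnd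
        by_cases hme : s(v, y) ∈ t.edges
        · -- degenerate: sum is even, contradiction
          obtain ⟨q, hq, hqs⟩ := edge_at_end_s12 t hp h.ne hme
          have hqnil : q = Walk.nil := by
            apply (Walk.isPath_iff_eq_nil (p := q)).mp
            rw [Walk.isPath_def]
            rw [hqs] at hnd
            exact (List.nodup_append.mp hnd).1
          subst hqnil
          simp only [Walk.edges_nil, List.nil_append] at hq
          rw [Walk.edges_cons, hq] at hs
          rw [List.map_cons, List.map_cons, List.map_nil, List.sum_cons, List.sum_cons,
            List.sum_nil, add_zero, CharTwo.add_self_eq_zero] at hs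
          exact absurd hs (by decide)
        · exact ⟨v, Walk.cons h t, (Walk.cons_isCycle_iff t h).mpr ⟨hp, hme⟩, hs⟩
      · -- duplicate vertex: split
        rw [List.nodup_iff_count_le_one] at hnd
        push_neg at hnd
        obtain ⟨x, hx2⟩ := hnd
        have hx : x ∈ t.support := List.count_pos_iff.mp (by omega)
        have hspec := t.take_spec hx
        have hcnt1 := t.count_support_takeUntil_eq_one hx
        have hxr : x ∈ (t.dropUntil x hx).support.tail := by
          have hsupp : t.support = (t.takeUntil x hx).support ++ (t.dropUntil x hx).support.tail := by
            conv_lhs => rw [← hspec]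
            exact Walk.support_append _ _
          have : 1 < List.count x ((t.takeUntil x hx).support ++ (t.dropUntil x hx).support.tail) := by
            rw [← hsupp]; exact hx2
          rw [List.count_append, hcnt1] at this
          exact List.count_pos_iff.mp (by omega)
        cases hdrop : t.dropUntil x hx with
        | nil => rw [hdrop] at hxr; simp at hxr
        | @cons _ z _ h₃ r₃ =>
          rw [hdrop] at hxr hspec
          simp only [Walk.support_cons, List.tail_cons] at hxr
          have hspec3 := r₃.take_spec hxr
          -- pieces
          have hqdef : t.takeUntil x hx = t.takeUntil x hx := rfl
          have houter : (Walk.cons h (t.takeUntil x hx)).append (r₃.dropUntil x hxr) = Walk.cons h ((t.takeUntil x hx).append (r₃.dropUntil x hxr)) := by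
            simp [Walk.cons_append]
          -- sums
          have hsum : ((Walk.cons h ((t.takeUntil x hx).append (r₃.dropUntil x hxr))).edges.map ℓ').sum
              + (((Walk.cons h₃ (r₃.takeUntil x hxr)).edges.map ℓ').sum) = 1 := by
            have ht : t = (t.takeUntil x hx).append (Walk.cons h₃ ((r₃.takeUntil x hxr).append (r₃.dropUntil x hxr))) := by
              rw [hspec3]; exact hspec.symm
            rw [Walk.edges_cons] at hs
            conv_rhs at hs => skip
            rw [ht] at hs
            simp only [Walk.edges_append, Walk.edges_cons, List.map_append, List.map_cons,
              List.sum_append, List.sum_cons, List.map_append, List.sum_append] at hs ⊢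
            linear_combination hs
          rcases sum_split _ _ hsum with h1 | h1
          · -- outer walk
            refine ih v ((Walk.cons h (t.takeUntil x hx)).append (r₃.dropUntil x hxr)) ?_ (by rwa [houter])
            have e1 := congrArg Walk.length hspec
            have e2 := congrArg Walk.length hspec3
            rw [Walk.length_append] at e1
            rw [Walk.length_append] at e2
            have e3 : (Walk.cons h t).length ≤ n + 1 := hl
            rw [Walk.length_cons] at e1 e3
            rw [Walk.length_append, Walk.length_cons]
            omega
          · refine ih x (Walk.cons h₃ (r₃.takeUntil x hxr)) ?_ h1
            have e1 := congrArg Walk.length hspec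
            have e2 := congrArg Walk.length hspec3
            rw [Walk.length_append] at e1
            rw [Walk.length_append] at e2
            have e3 : (Walk.cons h t).length ≤ n + 1 := hl
            rw [Walk.length_cons] at e1 e3
            rw [Walk.length_cons]
            omega

private lemma z2_ne_one {a : ZMod 2} (h : a ≠ 1) : a = 0 := by revert h; revert a; decide

private lemma core {V : Type*} [DecidableEq V] {G F : SimpleGraph V} (hF : F ≤ G)
    (hFspan : ∀ u v : V, F.Reachable u v ↔ G.Reachable u v)
    (ℓ' : Sym2 V → ZMod 2) {a b : V} {e' : Sym2 V} (hab : G.Adj a b)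
    (hee' : s(a, b) ≠ e') (heF : s(a, b) ∉ F.edgeSet) (he'F : e' ∉ F.edgeSet)
    (hno : ∀ (v : V) (γ : (G.deleteEdges {s(a, b)}).Walk v v), γ.IsCycle →
      (γ.edges.map ℓ').sum ≠ 1)
    (hno' : ∀ (v : V) (γ : (G.deleteEdges {e'}).Walk v v), γ.IsCycle →
      (γ.edges.map ℓ').sum ≠ 1)
    (v₀ : V) (γ : G.Walk v₀ v₀) (hγc : γ.IsCycle) (hγs : (γ.edges.map ℓ').sum = 1) :
    False := by
  -- the forest path from a to b
  obtain ⟨QW0⟩ := (hFspan a b).2 hab.reachable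
  obtain ⟨QW, Qp⟩ := QW0.toPath
  have hQF : ∀ f ∈ QW.edges, f ∈ F.edgeSet := fun f hf => QW.edges_subset_edgeSet hf
  -- transfer targets
  have hQmem' : ∀ f ∈ QW.edges, f ∈ (G.deleteEdges {e'}).edgeSet := by
    intro f hf
    rw [SimpleGraph.edgeSet_deleteEdges]
    refine ⟨SimpleGraph.edgeSet_mono hF (hQF _ hf), ?_⟩
    simp only [Set.mem_singleton_iff]
    rintro rfl
    exact he'F (hQF _ hf)
  have hQmem : ∀ f ∈ QW.edges, f ∈ (G.deleteEdges {s(a, b)}).edgeSet := by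
    intro f hf
    rw [SimpleGraph.edgeSet_deleteEdges]
    refine ⟨SimpleGraph.edgeSet_mono hF (hQF _ hf), ?_⟩
    simp only [Set.mem_singleton_iff]
    rintro rfl
    exact heF (hQF _ hf)
  -- the fundamental cycle of s(a,b) lives in G - e' and hence is even
  have hab' : (G.deleteEdges {e'}).Adj a b := by
    rw [SimpleGraph.deleteEdges_adj]
    exact ⟨hab, by simpa using hee'⟩
  have hCc : (Walk.cons hab' (QW.transfer _ hQmem').reverse).IsCycle := by
    refine (Walk.cons_isCycle_iff _ hab').mpr ⟨(Qp.transfer hQmem').reverse, ?_⟩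
    rw [Walk.edges_reverse, List.mem_reverse, Walk.edges_transfer]
    intro hmem
    exact heF (hQF _ hmem)
  have hCs := hno' a _ hCc
  rw [Walk.edges_cons, List.map_cons, List.sum_cons, Walk.edges_reverse, List.map_reverse,
    List.sum_reverse, Walk.edges_transfer] at hCs
  have hQsum : (QW.edges.map ℓ').sum = ℓ' s(a, b) := by
    have h0 := z2_ne_one hCs
    have h1 : ∀ x y : ZMod 2, x + y = 0 → y = x := by decide
    exact h1 _ _ h0
  -- key absurdity for cycles at a through s(a,b)
  have habsurd : ∀ (w' : G.Walk a a), w'.IsCycle → (w'.edges.map ℓ').sum = 1 →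
      s(a, b) ∈ w'.edges → False := by
    intro w' hc hsum hmem
    cases w' with
    | nil => exact Walk.IsCycle.not_of_nil hc
    | @cons _ c _ h₁ t =>
      obtain ⟨tp, hfe⟩ := (Walk.cons_isCycle_iff t h₁).mp hc
      rw [Walk.edges_cons, List.map_cons, List.sum_cons] at hsum
      by_cases hcb : s(a, b) = s(a, c)
      · -- the first edge is s(a,b); drop it and close up with the forest path
        have hbc : b = c := Sym2.congr_right.mp hcb
        subst hbc
        have htmem : ∀ f ∈ t.edges, f ∈ (G.deleteEdges {s(a, b)}).edgeSet := by
          intro f hf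
          rw [SimpleGraph.edgeSet_deleteEdges]
          refine ⟨t.edges_subset_edgeSet hf, ?_⟩
          simp only [Set.mem_singleton_iff]
          rintro rfl
          exact hfe hf
        have hWsum : ((((t.transfer _ htmem).append (QW.transfer _ hQmem)).edges.map ℓ').sum) = 1 := by
          rw [Walk.edges_append, List.map_append, List.sum_append, Walk.edges_transfer,
            Walk.edges_transfer, hQsum]
          linear_combination hsum
        obtain ⟨u, cyc, hcyc, hsum1⟩ := odd_closed_walk ℓ'
          (((t.transfer _ htmem).append (QW.transfer _ hQmem)).length) b _ le_rfl hWsum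
        exact hno u cyc hcyc hsum1
      · -- s(a,b) is the last edge of t
        have hmet : s(a, b) ∈ t.edges := by
          rcases (List.mem_cons).mp (by rwa [Walk.edges_cons] at hmem) with h' | h'
          · exact absurd h' hcb
          · exact h'
        obtain ⟨qq, hqq, -⟩ := edge_at_end_s12 t tp h₁.ne hmet
        have henq : s(a, b) ∉ qq.edges := by
          have hnd := tp.isTrail.edges_nodup
          rw [hqq, List.nodup_append] at hnd
          intro hmm
          exact hnd.2.2 _ hmm _ (List.mem_singleton_self _) rfl
        have hPmem : ∀ f ∈ (Walk.cons h₁ qq).edges, f ∈ (G.deleteEdges {s(a, b)}).edgeSet := by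
          intro f hf
          rw [SimpleGraph.edgeSet_deleteEdges]
          refine ⟨(Walk.cons h₁ qq).edges_subset_edgeSet hf, ?_⟩
          simp only [Set.mem_singleton_iff]
          rintro rfl
          rw [Walk.edges_cons] at hf
          rcases List.mem_cons.mp hf with h' | h'
          · exact hcb h'
          · exact henq h'
        have hWsum : (((((Walk.cons h₁ qq).transfer _ hPmem)).append
            (QW.transfer _ hQmem).reverse).edges.map ℓ').sum = 1 := by
          rw [Walk.edges_append, List.map_append, List.sum_append, Walk.edges_transfer,
            Walk.edges_reverse, List.map_reverse, List.sum_reverse, Walk.edges_transfer,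
            Walk.edges_cons, List.map_cons, List.sum_cons, hQsum]
          rw [hqq, List.map_append, List.sum_append] at hsum
          simp only [List.map_cons, List.map_nil, List.sum_cons, List.sum_nil, add_zero] at hsum
          linear_combination hsum
        obtain ⟨u, cyc, hcyc, hsum1⟩ := odd_closed_walk ℓ' _ a _ le_rfl hWsum
        exact hno u cyc hcyc hsum1
  -- finish: the odd cycle γ must use the edge s(a,b)
  by_cases hmem : s(a, b) ∈ γ.edges
  · have ha : a ∈ γ.support := γ.fst_mem_support_of_mem_edges hmem
    have hrc := hγc.rotate ha
    have hperm : List.Perm (γ.rotate a ha).edges γ.edges := (γ.rotate_edges a ha).perm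
    refine habsurd (γ.rotate a ha) hrc ?_ ?_
    · rw [← hγs]
      exact (hperm.map ℓ').sum_eq
    · exact hperm.mem_iff.mpr hmem
  · have hγmem : ∀ f ∈ γ.edges, f ∈ (G.deleteEdges {s(a, b)}).edgeSet := by
      intro f hf
      rw [SimpleGraph.edgeSet_deleteEdges]
      refine ⟨γ.edges_subset_edgeSet hf, ?_⟩
      simp only [Set.mem_singleton_iff]
      rintro rfl
      exact hmem hf
    refine hno v₀ (γ.transfer _ hγmem) (hγc.transfer hγmem) ?_
    rw [Walk.edges_transfer]
    exact hγs


/-- Let `G` be a simple graph on a finite vertex type with a family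
`ℓ : Fin p → Sym2 V → ZMod 2` of `p` edge-labelings. Call a subgraph `G' ≤ G`
well-behaved if for every `i : Fin p` it contains a cycle whose `ℓ i`-label sum is `1`.
If `G` is well-behaved but deleting any single edge of `G` destroys well-behavedness,
then for every spanning forest `F` of `G` the number of non-forest edges is at most `p`. -/
theorem stmt12 {V : Type*} [Fintype V] [DecidableEq V] {p : ℕ}
    (G : SimpleGraph V) [DecidableRel G.Adj] (ℓ : Fin p → Sym2 V → ZMod 2)
    (hgood : ∀ i : Fin p, ∃ (v : V) (γ : G.Walk v v), γ.IsCycle ∧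
        (γ.edges.map (ℓ i)).sum = 1)
    (hmin : ∀ e ∈ G.edgeSet,
        ¬ (∀ i : Fin p, ∃ (v : V) (γ : (G.deleteEdges {e}).Walk v v), γ.IsCycle ∧
            (γ.edges.map (ℓ i)).sum = 1))
    (F : SimpleGraph V) [DecidableRel F.Adj] (hF : F ≤ G) (hFacyclic : F.IsAcyclic)
    (hFspan : ∀ u v : V, F.Reachable u v ↔ G.Reachable u v) :
    (G.edgeFinset \ F.edgeFinset).card ≤ p := by
  classical
  rcases Nat.eq_zero_or_pos p with hp | hp
  · subst hp
    have hGe : G.edgeFinset = ∅ := by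
      rw [Finset.eq_empty_iff_forall_notMem]
      intro e he
      exact hmin e (SimpleGraph.mem_edgeFinset.mp he) (fun i => i.elim0)
    simp [hGe]
  · have hnep : Nonempty (Fin p) := ⟨⟨0, hp⟩⟩
    have key : ∀ e ∈ G.edgeFinset \ F.edgeFinset, ∃ i : Fin p,
        ∀ (v : V) (γ : (G.deleteEdges {e}).Walk v v), γ.IsCycle →
          (γ.edges.map (ℓ i)).sum ≠ 1 := by
      intro e he
      rw [Finset.mem_sdiff] at he
      have h := hmin e (SimpleGraph.mem_edgeFinset.mp he.1)
      push_neg at h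
      exact h
    set f : Sym2 V → Fin p := fun e =>
      if h : e ∈ G.edgeFinset \ F.edgeFinset then (key e h).choose
      else Classical.arbitrary _ with hfdef
    have hcard := Finset.card_le_card_of_injOn (s := G.edgeFinset \ F.edgeFinset) (t := Finset.univ) f
      (fun e _ => Finset.mem_univ (f e)) ?inj
    · simpa using hcard
    case inj =>
      intro e₁ he₁ e₂ he₂ hfeq
      by_contra hne'
      rw [Finset.mem_coe] at he₁ he₂
      have hf₁ : f e₁ = (key e₁ he₁).choose := dif_pos he₁
      have hf₂ : f e₂ = (key e₂ he₂).choose := dif_pos he₂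
      have hno : ∀ (v : V) (γ : (G.deleteEdges {e₁}).Walk v v), γ.IsCycle →
          (γ.edges.map (ℓ (f e₁))).sum ≠ 1 := by
        rw [hf₁]; exact (key e₁ he₁).choose_spec
      have hno' : ∀ (v : V) (γ : (G.deleteEdges {e₂}).Walk v v), γ.IsCycle →
          (γ.edges.map (ℓ (f e₁))).sum ≠ 1 := by
        rw [hfeq, hf₂]; exact (key e₂ he₂).choose_spec
      obtain ⟨a, b, rfl⟩ : ∃ a b, e₁ = s(a, b) :=
        Sym2.ind (fun a b => ⟨a, b, rfl⟩) e₁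
      rw [Finset.mem_sdiff] at he₁ he₂
      obtain ⟨v₀, γ, hγc, hγs⟩ := hgood (f s(a, b))
      exact core hF hFspan (ℓ (f s(a, b)))
        ((SimpleGraph.mem_edgeSet G).mp (SimpleGraph.mem_edgeFinset.mp he₁.1)) hne'
        (fun hc => he₁.2 (SimpleGraph.mem_edgeFinset.mpr hc))
        (fun hc => he₂.2 (SimpleGraph.mem_edgeFinset.mpr hc))
        hno hno' v₀ γ hγc hγs
end

section
/- Let (G, ℓ) be a ZMod 2-labeled graph on a vertex type V, and let G' be the simple graph on V × ZMod 2 in which (u, a) is adjacent to (v, b) if and only if G.Adj u v and b = a + ℓ({u, v}). Then for all vertices u, v : V and every s : ZMod 2, there exists a walk in G from u to v with label sum equal to s if and only if (u, 0) and (v, s) are joined by a walk in G' (i.e., G'.Reachable (u, 0) (v, s)). -/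
open SimpleGraph

/-- The parity double cover of a `ZMod 2`-labeled graph `(G, ℓ)`: the simple graph on
`V × ZMod 2` in which `(u, a)` is adjacent to `(v, b)` iff `G.Adj u v` and
`b = a + ℓ s(u, v)`. -/
def doubleCover {V : Type*} (G : SimpleGraph V) (ℓ : Sym2 V → ZMod 2) :
    SimpleGraph (V × ZMod 2) where
  Adj x y := G.Adj x.1 y.1 ∧ y.2 = x.2 + ℓ s(x.1, y.1)
  symm := by
    constructor
    rintro ⟨u, a⟩ ⟨v, b⟩ ⟨h, hb⟩
    refine ⟨h.symm, ?_⟩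
    simp only at hb ⊢
    rw [Sym2.eq_swap, hb]
    generalize ℓ s(u, v) = c
    clear hb h
    revert a c
    decide
  loopless := by
    constructor
    rintro ⟨u, a⟩ ⟨h, -⟩
    exact G.loopless.irrefl u h

private lemma dc_fwd {V : Type*} (G : SimpleGraph V) (ℓ : Sym2 V → ZMod 2) :
    ∀ {u v : V} (w : G.Walk u v) (a : ZMod 2),
      (doubleCover G ℓ).Reachable (u, a) (v, a + (w.edges.map ℓ).sum) := by
  intro u v w
  induction w with
  | nil => intro a; simpa using Reachable.refl _
  | @cons u x v h p ih =>
      intro a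
      have h1 : (doubleCover G ℓ).Adj (u, a) (x, a + ℓ s(u, x)) := ⟨h, rfl⟩
      have h2 := ih (a + ℓ s(u, x))
      simpa [add_assoc] using h1.reachable.trans h2

private lemma dc_bwd {V : Type*} (G : SimpleGraph V) (ℓ : Sym2 V → ZMod 2) :
    ∀ {x y : V × ZMod 2} (w : (doubleCover G ℓ).Walk x y),
      ∃ w' : G.Walk x.1 y.1, y.2 = x.2 + (w'.edges.map ℓ).sum := by
  intro x y w
  induction w with
  | nil => exact ⟨SimpleGraph.Walk.nil, by simp⟩
  | @cons x z y h p ih =>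
      obtain ⟨w', hw'⟩ := ih
      exact ⟨SimpleGraph.Walk.cons h.1 w', by
        simp [hw', h.2, add_assoc]⟩

/-- For all `u v : V` and `s : ZMod 2`, there is a walk in `G` from `u` to
`v` with label sum `s` iff `(u, 0)` and `(v, s)` are joined by a walk in the parity
double cover `G'`. -/
theorem stmt13 {V : Type*} (G : SimpleGraph V) (ℓ : Sym2 V → ZMod 2) :
    ∀ (u v : V) (s : ZMod 2),
      (∃ w : G.Walk u v, (w.edges.map ℓ).sum = s) ↔
        (doubleCover G ℓ).Reachable (u, 0) (v, s) := by
  intro u v s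
  constructor
  · rintro ⟨w, hw⟩
    simpa [hw] using dc_fwd G ℓ w 0
  · rintro ⟨w⟩
    obtain ⟨w', hw'⟩ := dc_bwd G ℓ w
    exact ⟨w', by simpa using hw'.symm⟩
end

section
/- Let G be an acyclic simple graph (a forest) and let w : G.Walk v v be a closed walk. Then every edge appears an even number of times in the edge list of w; that is, for every e : Sym2 V, the count of e in w.edges is even. -/
open SimpleGraph

private lemma aux14 {V : Type*} [DecidableEq V] {F : SimpleGraph V} (hF : F.IsAcyclic)
    {a b : V} (w : F.Walk a b) (e : Sym2 V) :
    Even (w.edges.count e + (w.toPath : F.Walk a b).edges.count e) := by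
  induction w with
  | nil =>
      simp [Path.loop_eq]
  | @cons a b' c h p ih =>
      by_cases hs : a ∈ (p.toPath : F.Walk b' c).support
      · -- split p.toPath at a
        set q : F.Walk b' c := (p.toPath : F.Walk b' c) with hq
        have hqp : q.IsPath := p.toPath.2
        have ht : (q.takeUntil a hs).IsPath := hqp.takeUntil hs
        have hd : (q.dropUntil a hs).IsPath := hqp.dropUntil hs
        -- the path from b' to a is the single edge
        have h1 : (⟨q.takeUntil a hs, ht⟩ : F.Path b' a)
            = ⟨Walk.cons h.symm Walk.nil, by simp [Walk.isPath_iff_eq_nil, h.ne']⟩ :=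
          hF.path_unique _ _
        have h1' : q.takeUntil a hs = Walk.cons h.symm Walk.nil :=
          congrArg Subtype.val h1
        have h2 : (⟨q.dropUntil a hs, hd⟩ : F.Path a c) = (Walk.cons h p).toPath :=
          hF.path_unique _ _
        have h2' : q.dropUntil a hs = ((Walk.cons h p).toPath : F.Walk a c) :=
          congrArg Subtype.val h2
        have hsplit : (q.takeUntil a hs).append (q.dropUntil a hs) = q := q.take_spec hs
        have hedges : q.edges = (q.takeUntil a hs).edges ++ (q.dropUntil a hs).edges := by
          rw [← Walk.edges_append, hsplit]
        have hcount : q.edges.count e =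
            (if s(b', a) = e then 1 else 0)
              + ((Walk.cons h p).toPath : F.Walk a c).edges.count e := by
          rw [hedges, List.count_append, h1', h2']
          simp [List.count_cons, List.count_singleton]
        have hsym : s(b', a) = s(a, b') := Sym2.eq_swap
        rw [hsym] at hcount
        simp only [Walk.edges_cons, List.count_cons, beq_iff_eq]
        rcases ih with ⟨k, hk⟩
        by_cases he : s(a, b') = e
        · rw [if_pos he] at hcount
          rw [if_pos he]
          exact ⟨k, by omega⟩
        · rw [if_neg he] at hcount
          rw [if_neg he]
          exact ⟨k, by omega⟩
      · -- cons h p.toPath is a path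
        have hpath : (Walk.cons h (p.toPath : F.Walk b' c)).IsPath :=
          p.toPath.2.cons hs
        have h1 : (⟨Walk.cons h (p.toPath : F.Walk b' c), hpath⟩ : F.Path a c)
            = (Walk.cons h p).toPath := hF.path_unique _ _
        have h1' : Walk.cons h (p.toPath : F.Walk b' c)
            = ((Walk.cons h p).toPath : F.Walk a c) := congrArg Subtype.val h1
        rw [← h1']
        simp only [Walk.edges_cons, List.count_cons]
        simp only [beq_iff_eq]
        rcases ih with ⟨k, hk⟩
        by_cases he : s(a, b') = e
        · rw [if_pos he]
          exact ⟨k + 1, by omega⟩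
        · rw [if_neg he]
          exact ⟨k, by omega⟩

/-- In an acyclic simple graph (a forest), every edge appears an even
number of times in the edge list of any closed walk. -/
theorem stmt14 {V : Type*} [DecidableEq V] (F : SimpleGraph V) (hF : F.IsAcyclic)
    {v : V} (w : F.Walk v v) (e : Sym2 V) :
    Even (w.edges.count e) := by
  have h := aux14 hF w e
  have h0 : w.toPath = Path.nil := Path.loop_eq _
  rw [h0] at h
  simpa using h
end

section
/- Let X be a finite type with exactly k elements, k ≥ 1, and let m ≥ 1. The number of sequences (Φ₁, …, Φ_m) of setoids on X that are finer and finer, i.e., Φ_{i+1} ≤ Φ_i in the refinement order for all i (equivalently, antitone functions from Fin m to the setoid lattice on X), is at most C(m + k − 1, k − 1) · k^(2k), where C denotes the binomial coefficient. -/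
namespace Stmt15Aux

open Finset Function

variable {X : Type*} [Fintype X] [LinearOrder X]

/-- The minimum of the equivalence class of `x`. -/
noncomputable def mu (s : Setoid X) (x : X) : X :=
  letI := Classical.decPred (fun y => s x y)
  ((Finset.univ : Finset X).filter (fun y => s x y)).min'
    ⟨x, Finset.mem_filter.2 ⟨Finset.mem_univ x, s.refl x⟩⟩

lemma mu_rel (s : Setoid X) (x : X) : s x (mu s x) := by
  classical
  have h := Finset.min'_mem ((Finset.univ : Finset X).filter (fun y => s x y))
    ⟨x, Finset.mem_filter.2 ⟨Finset.mem_univ x, s.refl x⟩⟩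
  rw [Finset.mem_filter] at h
  unfold mu
  convert h.2 using 2

lemma mu_min {s : Setoid X} {x y : X} (h : s x y) : mu s x ≤ y := by
  classical
  have h2 := Finset.min'_le ((Finset.univ : Finset X).filter (fun z => s x z)) y
    (Finset.mem_filter.2 ⟨Finset.mem_univ y, h⟩)
  unfold mu
  convert h2 using 2

lemma mu_le (s : Setoid X) (x : X) : mu s x ≤ x := mu_min (s.refl x)

lemma mu_congr {s : Setoid X} {x y : X} (h : s x y) : mu s x = mu s y :=
  le_antisymm (mu_min (s.trans h (mu_rel s y))) (mu_min (s.trans (s.symm h) (mu_rel s x)))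

/-- Number of parts of a setoid. -/
noncomputable def nparts (s : Setoid X) : ℕ := Nat.card (Quotient s)

lemma nparts_pos [Nonempty X] (s : Setoid X) : 1 ≤ nparts s := by
  have : Nonempty (Quotient s) := ⟨Quotient.mk'' (Classical.arbitrary X)⟩
  exact Nat.card_pos

lemma nparts_le_card (s : Setoid X) : nparts s ≤ Fintype.card X := by
  rw [nparts, ← Nat.card_eq_fintype_card]
  exact Nat.card_le_card_of_surjective (Quotient.mk'') Quotient.mk''_surjective

/-- The canonical surjection between quotients. -/
noncomputable def qmap (s t : Setoid X) (h : s ≤ t) : Quotient s → Quotient t :=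
  Quotient.map' id (fun _ _ hab => Setoid.le_def.mp h hab)

lemma qmap_mk (s t : Setoid X) (h : s ≤ t) (x : X) :
    qmap s t h (Quotient.mk'' x) = Quotient.mk'' x := rfl

lemma qmap_surj (s t : Setoid X) (h : s ≤ t) : Surjective (qmap s t h) := by
  intro q
  induction q using Quotient.inductionOn' with
  | h x => exact ⟨Quotient.mk'' x, rfl⟩

lemma nparts_anti {s t : Setoid X} (h : s ≤ t) : nparts t ≤ nparts s :=
  Nat.card_le_card_of_surjective (qmap s t h) (qmap_surj s t h)

lemma le_of_le_of_nparts_eq {s t : Setoid X} (h : s ≤ t) (hc : nparts s = nparts t) :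
    t ≤ s := by
  have hb : Function.Bijective (qmap s t h) :=
    (Nat.bijective_iff_surjective_and_card (qmap s t h)).2 ⟨qmap_surj s t h, hc⟩
  rw [Setoid.le_def]
  intro x y hxy
  have hq : qmap s t h (Quotient.mk'' x) = qmap s t h (Quotient.mk'' y) := by
    rw [qmap_mk, qmap_mk]
    exact Quotient.eq''.mpr hxy
  exact Quotient.eq''.mp (hb.1 hq)

variable {m : ℕ}

/-- The set of indices where `x` is not the minimum of its class. -/
noncomputable def NM (Φ : Fin m → Setoid X) (x : X) : Finset (Fin m) :=
  letI := Classical.decEq X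
  Finset.univ.filter (fun i => mu (Φ i) x ≠ x)

lemma mem_NM {Φ : Fin m → Setoid X} {x : X} {i : Fin m} :
    i ∈ NM Φ x ↔ mu (Φ i) x ≠ x := by
  simp [NM]

lemma mu_eq_of_le {Φ : Fin m → Setoid X} (hΦ : Antitone Φ) {x : X} {i j : Fin m}
    (hij : i ≤ j) (hi : mu (Φ i) x = x) : mu (Φ j) x = x := by
  have h1 : (Φ i) x (mu (Φ j) x) := Setoid.le_def.mp (hΦ hij) (mu_rel (Φ j) x)
  have h2 := mu_min h1
  rw [hi] at h2
  exact le_antisymm (mu_le _ _) h2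

/-- The encoding of an element. -/
noncomputable def enc (Φ : Fin m → Setoid X) (x : X) : X × ℕ :=
  if h : (NM Φ x).Nonempty then
    (mu (Φ ((NM Φ x).max' h)) x, nparts (Φ ((NM Φ x).max' h)))
  else (x, 0)

lemma enc_cases (Φ : Fin m → Setoid X) (x : X) :
    (¬ (NM Φ x).Nonempty ∧ enc Φ x = (x, 0)) ∨
      ((enc Φ x).1 < x ∧ 1 ≤ (enc Φ x).2) := by
  by_cases h : (NM Φ x).Nonempty
  · right
    have : Nonempty X := ⟨x⟩
    rw [enc, dif_pos h]
    exact ⟨lt_of_le_of_ne (mu_le _ _) (mem_NM.mp ((NM Φ x).max'_mem h)), nparts_pos _⟩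
  · left
    exact ⟨h, by rw [enc, dif_neg h]⟩

lemma enc_snd_le (Φ : Fin m → Setoid X) (x : X) : (enc Φ x).2 ≤ Fintype.card X := by
  rw [enc]
  split_ifs with h
  · exact nparts_le_card _
  · simp

/-- Key lemma: `x` is `Ψ i`-related to the minimum of its `Φ i`-class. -/
lemma rel_mu (Φ Ψ : Fin m → Setoid X) (hΦ : Antitone Φ) (hΨ : Antitone Ψ)
    (hc : ∀ i, nparts (Φ i) = nparts (Ψ i)) (he : ∀ x, enc Φ x = enc Ψ x)
    (i : Fin m) : ∀ x : X, (Ψ i) x (mu (Φ i) x) := by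
  have H : ∀ x : X, (∀ y, y < x → (Ψ i) y (mu (Φ i) y)) → (Ψ i) x (mu (Φ i) x) := by
    intro x IH
    by_cases hx : mu (Φ i) x = x
    · rw [hx]
    · have hiNM : i ∈ NM Φ x := mem_NM.2 hx
      have hne : (NM Φ x).Nonempty := ⟨i, hiNM⟩
      set i0 := (NM Φ x).max' hne with hi0
      have hii0 : i ≤ i0 := Finset.le_max' _ i hiNM
      have hi0NM : i0 ∈ NM Φ x := Finset.max'_mem _ _
      set p := mu (Φ i0) x with hp
      have hpx : p < x := lt_of_le_of_ne (mu_le _ _) (mem_NM.1 hi0NM)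
      have hencΦ : enc Φ x = (p, nparts (Φ i0)) := by rw [enc, dif_pos hne]
      have hencΨ : enc Ψ x = (p, nparts (Φ i0)) := (he x).symm.trans hencΦ
      have hneΨ : (NM Ψ x).Nonempty := by
        by_contra h
        rw [enc, dif_neg h] at hencΨ
        exact absurd (congrArg Prod.fst hencΨ).symm (ne_of_lt hpx)
      set j0 := (NM Ψ x).max' hneΨ with hj0
      have hencΨ' : enc Ψ x = (mu (Ψ j0) x, nparts (Ψ j0)) := by rw [enc, dif_pos hneΨ]
      have hmuΨ : mu (Ψ j0) x = p := congrArg Prod.fst (hencΨ'.symm.trans hencΨ)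
      have hnpΨ : nparts (Ψ j0) = nparts (Φ i0) :=
        congrArg Prod.snd (hencΨ'.symm.trans hencΨ)
      have hij0 : i ≤ j0 := by
        by_contra hcon
        push_neg at hcon
        have h1 : nparts (Ψ j0) ≤ nparts (Ψ i) := nparts_anti (hΨ hcon.le)
        have h2 : nparts (Ψ i) ≤ nparts (Ψ i0) := by
          rw [← hc i, ← hc i0]; exact nparts_anti (hΦ hii0)
        have h3 : nparts (Ψ i0) = nparts (Ψ j0) := by rw [← hc i0, ← hnpΨ]
        have heq : nparts (Ψ j0) = nparts (Ψ i) := by omega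
        have hle : Ψ i ≤ Ψ j0 := hΨ hcon.le
        have hle' : Ψ j0 ≤ Ψ i := le_of_le_of_nparts_eq hle heq.symm
        have hEq : Ψ i = Ψ j0 := le_antisymm hle hle'
        have hxx : mu (Ψ i) x ≠ x := by
          rw [hEq]; exact mem_NM.1 ((NM Ψ x).max'_mem hneΨ)
        exact absurd (Finset.le_max' _ i (mem_NM.2 hxx)) (not_le.mpr hcon)
      have h1 : (Ψ i) x p := Setoid.le_def.mp (hΨ hij0) (hmuΨ ▸ mu_rel (Ψ j0) x)
      have h2 : (Φ i) x p := Setoid.le_def.mp (hΦ hii0) (mu_rel (Φ i0) x)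
      have h3 : (Ψ i) p (mu (Φ i) p) := IH p hpx
      rw [mu_congr ((Φ i).symm h2)] at h3
      exact (Ψ i).trans h1 h3
  exact fun x => wellFounded_lt.induction x H

lemma le_aux (Φ Ψ : Fin m → Setoid X) (hΦ : Antitone Φ) (hΨ : Antitone Ψ)
    (hc : ∀ i, nparts (Φ i) = nparts (Ψ i)) (he : ∀ x, enc Φ x = enc Ψ x)
    (i : Fin m) : Φ i ≤ Ψ i := by
  rw [Setoid.le_def]
  intro x y hxy
  have h1 := rel_mu Φ Ψ hΦ hΨ hc he i x
  have h2 := rel_mu Φ Ψ hΦ hΨ hc he i y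
  rw [mu_congr hxy] at h1
  exact (Ψ i).trans h1 ((Ψ i).symm h2)

lemma key (Φ Ψ : Fin m → Setoid X) (hΦ : Antitone Φ) (hΨ : Antitone Ψ)
    (hc : ∀ i, nparts (Φ i) = nparts (Ψ i)) (he : ∀ x, enc Φ x = enc Ψ x) : Φ = Ψ := by
  funext i
  exact le_antisymm (le_aux Φ Ψ hΦ hΨ hc he i)
    (le_aux Ψ Φ hΨ hΦ (fun j => (hc j).symm) (fun x => (he x).symm) i)

end Stmt15Aux

open Stmt15Aux in
/-- Let `X` be a finite type with exactly `k ≥ 1` elements and `m ≥ 1`.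
The number of finer-and-finer sequences `(Φ₁, …, Φ_m)` of setoids on `X` (i.e. antitone
functions from `Fin m` to the lattice of setoids on `X`) is at most
`C(m + k - 1, k - 1) * k ^ (2 * k)`. -/
theorem stmt15 {X : Type*} [Fintype X] (k m : ℕ) (hk : Fintype.card X = k)
    (hk1 : 1 ≤ k) (hm : 1 ≤ m) :
    Nat.card {Φ : Fin m → Setoid X // Antitone Φ} ≤
      (m + k - 1).choose (k - 1) * k ^ (2 * k) := by
  classical
  subst hk
  letI : LinearOrder X := LinearOrder.lift' (Fintype.equivFin X) (Equiv.injective _)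
  have hX : Nonempty X := Fintype.card_pos_iff.mp (by omega)
  set K := Fintype.card X with hK
  have hb1 : ∀ (Φ : Fin m → Setoid X) (i : Fin m), nparts (Φ i) - 1 < K := by
    intro Φ i
    have h1 := nparts_le_card (Φ i)
    have h2 := nparts_pos (Φ i)
    omega
  have hb2 : ∀ (Φ : Fin m → Setoid X) (x : X), (enc Φ x).2 - 1 < K := by
    intro Φ x
    have h1 := enc_snd_le Φ x
    omega
  let cfin : (Fin m → Setoid X) → Fin m → Fin K := fun Φ i => ⟨nparts (Φ i) - 1, hb1 Φ i⟩
  let F : {Φ : Fin m → Setoid X // Antitone Φ} → Sym (Fin K) m × (X → X × Fin K) :=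
    fun Φp => (⟨(List.ofFn (cfin Φp.1) : Multiset (Fin K)), by simp⟩,
      fun x => ((enc Φp.1 x).1, ⟨(enc Φp.1 x).2 - 1, hb2 Φp.1 x⟩))
  have hF : Function.Injective F := by
    rintro ⟨Φ, hΦ⟩ ⟨Ψ, hΨ⟩ hFeq
    have h1 : (⟨(List.ofFn (cfin Φ) : Multiset (Fin K)), by simp⟩ : Sym (Fin K) m)
        = ⟨(List.ofFn (cfin Ψ) : Multiset (Fin K)), by simp⟩ := congrArg Prod.fst hFeq
    have h2 := congrArg Prod.snd hFeq
    have hmono : ∀ (Θ : Fin m → Setoid X), Antitone Θ → Monotone (cfin Θ) := by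
      intro Θ hΘ i j hij
      have : nparts (Θ i) ≤ nparts (Θ j) := nparts_anti (hΘ hij)
      exact Fin.mk_le_mk.mpr (by omega)
    have hperm : List.Perm (List.ofFn (cfin Φ)) (List.ofFn (cfin Ψ)) :=
      Multiset.coe_eq_coe.mp (congrArg Subtype.val h1)
    have hl : List.ofFn (cfin Φ) = List.ofFn (cfin Ψ) :=
      List.Perm.eq_of_sortedLE (List.sortedLE_ofFn_iff.mpr (hmono Φ hΦ))
        (List.sortedLE_ofFn_iff.mpr (hmono Ψ hΨ)) hperm
    have hcfin : cfin Φ = cfin Ψ := List.ofFn_injective hl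
    have hc : ∀ i, nparts (Φ i) = nparts (Ψ i) := by
      intro i
      have hv : nparts (Φ i) - 1 = nparts (Ψ i) - 1 :=
        congrArg Fin.val (congrFun hcfin i)
      have hp1 := nparts_pos (Φ i)
      have hp2 := nparts_pos (Ψ i)
      omega
    have he : ∀ x, enc Φ x = enc Ψ x := by
      intro x
      have hx := congrFun h2 x
      simp only [F, Prod.mk.injEq, Fin.mk.injEq] at hx
      obtain ⟨hfst, hsnd⟩ := hx
      rcases enc_cases Φ x with ⟨_, hΦ0⟩ | ⟨hlt, hge⟩ <;>
        rcases enc_cases Ψ x with ⟨_, hΨ0⟩ | ⟨hlt', hge'⟩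
      · rw [hΦ0, hΨ0]
      · exfalso
        rw [hΦ0] at hfst
        simp only at hfst
        rw [← hfst] at hlt'
        exact lt_irrefl x hlt'
      · exfalso
        rw [hΨ0] at hfst
        simp only at hfst
        rw [hfst] at hlt
        exact lt_irrefl x hlt
      · have hs : (enc Φ x).2 = (enc Ψ x).2 := by omega
        exact Prod.ext hfst hs
    exact Subtype.ext (key Φ Ψ hΦ hΨ hc he)
  have hcard1 : Nat.card {Φ : Fin m → Setoid X // Antitone Φ}
      ≤ Nat.card (Sym (Fin K) m × (X → X × Fin K)) :=
    Nat.card_le_card_of_injective F hF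
  have hcard2 : Nat.card (Sym (Fin K) m × (X → X × Fin K))
      = (K + m - 1).choose m * (K * K) ^ K := by
    rw [Nat.card_prod, Nat.card_fun, Nat.card_prod]
    rw [Nat.card_eq_fintype_card, Nat.card_eq_fintype_card, Nat.card_eq_fintype_card]
    rw [Sym.card_sym_eq_choose, Fintype.card_fin, ← hK]
  have hchoose : (K + m - 1).choose m = (m + K - 1).choose (K - 1) := by
    have h1 : K + m - 1 = m + K - 1 := by omega
    have h2 : m + K - 1 - (K - 1) = m := by omega
    rw [h1, ← Nat.choose_symm (by omega : K - 1 ≤ m + K - 1), h2]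
  have hpow : (K * K) ^ K = K ^ (2 * K) := by
    rw [← pow_two, ← pow_mul]
  calc Nat.card {Φ : Fin m → Setoid X // Antitone Φ}
      ≤ (K + m - 1).choose m * (K * K) ^ K := hcard2 ▸ hcard1
    _ = (m + K - 1).choose (K - 1) * K ^ (2 * K) := by rw [hchoose, hpow]
end
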